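/- arXiv:2004.12490 — 5 statements merged into one kernel-verified Lean document; each statement's English description precedes it below -/
import Mathlib

section
/- Let p be prime, n a positive integer, and c = (c_{ij}) an n×n matrix of nonnegative integers with c_{ii} = 0 for all i. Define Γ(c) = { x ∈ GL_n(ℤ_p) : p^{c_{ij}} divides (x_{ij} − δ_{ij}) for all i,j }. Then Γ(c) is closed under matrix multiplication if c_{ij} ≤ c_{ik} + c_{kj} for all i, j, k. -/
/-- `Γ(c)` is closed under matrix multiplication whenever
`c i j ≤ c i k + c k j` for all `i j k`. -/
theorem stmt_2 (p : ℕ) [Fact p.Prime] (n : ℕ) (hn : 0 < n)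
    (c : Fin n → Fin n → ℕ) (hdiag : ∀ i, c i i = 0)
    (htri : ∀ i j k, c i j ≤ c i k + c k j)
    (x y : Matrix.GeneralLinearGroup (Fin n) ℤ_[p])
    (hx : ∀ i j, (p : ℤ_[p]) ^ (c i j) ∣
      ((x : Matrix (Fin n) (Fin n) ℤ_[p]) i j - if i = j then 1 else 0))
    (hy : ∀ i j, (p : ℤ_[p]) ^ (c i j) ∣
      ((y : Matrix (Fin n) (Fin n) ℤ_[p]) i j - if i = j then 1 else 0)) :
    ∀ i j, (p : ℤ_[p]) ^ (c i j) ∣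
      (((x * y : Matrix.GeneralLinearGroup (Fin n) ℤ_[p]) :
        Matrix (Fin n) (Fin n) ℤ_[p]) i j - if i = j then 1 else 0) := by
  intro i j
  set X : Matrix (Fin n) (Fin n) ℤ_[p] := (x : Matrix (Fin n) (Fin n) ℤ_[p])
  set Y : Matrix (Fin n) (Fin n) ℤ_[p] := (y : Matrix (Fin n) (Fin n) ℤ_[p])
  have hcoe : ((x * y : Matrix.GeneralLinearGroup (Fin n) ℤ_[p]) :
      Matrix (Fin n) (Fin n) ℤ_[p]) = X * Y := rfl
  have key : (X * Y) i j - (if i = j then 1 else 0) =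
      (∑ k, (X i k - if i = k then 1 else 0) * (Y k j - if k = j then 1 else 0))
      + (X i j - if i = j then 1 else 0) + (Y i j - if i = j then 1 else 0) := by
    rw [Matrix.mul_apply]
    have h1 : ∀ k ∈ Finset.univ, X i k * Y k j =
        (X i k - if i = k then 1 else 0) * (Y k j - if k = j then 1 else 0)
        + (if i = k then 1 else 0) * Y k j + X i k * (if k = j then 1 else 0)
        - (if i = k then 1 else 0) * (if k = j then 1 else 0) := by
      intro k _
      ring
    rw [Finset.sum_congr rfl h1]
    rw [Finset.sum_sub_distrib, Finset.sum_add_distrib, Finset.sum_add_distrib]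
    simp only [ite_mul, mul_ite, one_mul, mul_one, zero_mul, mul_zero,
      Finset.sum_ite_eq, Finset.sum_ite_eq', Finset.mem_univ, if_true]
    ring
  rw [hcoe, key]
  refine dvd_add (dvd_add ?_ (hx i j)) (hy i j)
  refine Finset.dvd_sum fun k _ => ?_
  calc (p : ℤ_[p]) ^ c i j ∣ (p : ℤ_[p]) ^ (c i k + c k j) :=
        pow_dvd_pow _ (htri i j k)
    _ ∣ _ := by
        rw [pow_add]
        exact mul_dvd_mul (hx i k) (hy k j)
end

section
/- Let p be prime, n a positive integer, and c = (c_{ij}) an n×n matrix of nonnegative integers with c_{ii}=0 satisfying c_{ij} ≤ c_{ik} + c_{kj} for all i,j,k. Then Γ(c) = { x ∈ GL_n(ℤ_p) : p^{c_{ij}} | (x_{ij} − δ_{ij}) } is closed under taking inverses. -/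
section aux

variable {p : ℕ} [Fact p.Prime] {n : ℕ} (c : Fin n → Fin n → ℕ)

/-- Membership in `Γ(c)` as a predicate on matrices. -/
def gammaMem (a : Matrix (Fin n) (Fin n) ℤ_[p]) : Prop :=
  ∀ i j, (p : ℤ_[p]) ^ (c i j) ∣ (a i j - if i = j then 1 else 0)

lemma gammaMem_one : gammaMem c (1 : Matrix (Fin n) (Fin n) ℤ_[p]) := by
  intro i j
  simp [Matrix.one_apply]

lemma gammaMem_mul (htri : ∀ i j k, c i j ≤ c i k + c k j)
    {a b : Matrix (Fin n) (Fin n) ℤ_[p]} (ha : gammaMem c a) (hb : gammaMem c b) :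
    gammaMem c (a * b) := by
  intro i j
  have key : (a * b) i j - (if i = j then 1 else 0) =
      (∑ k, (a i k - if i = k then 1 else 0) * (b k j - if k = j then 1 else 0))
      + (a i j - if i = j then 1 else 0) + (b i j - if i = j then 1 else 0) := by
    have h1 : (∑ k, a i k * (if k = j then (1:ℤ_[p]) else 0)) = a i j := by
      simp [Finset.sum_ite_eq']
    have h2 : (∑ k, (if i = k then (1:ℤ_[p]) else 0) * b k j) = b i j := by
      simp [Finset.sum_ite_eq]
    have h3 : (∑ k, (if i = k then (1:ℤ_[p]) else 0) * (if k = j then (1:ℤ_[p]) else 0))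
        = if i = j then 1 else 0 := by
      simp [Finset.sum_ite_eq]
    simp only [Matrix.mul_apply, sub_mul, mul_sub, Finset.sum_sub_distrib]
    rw [h1, h2, h3]
    ring
  rw [key]
  refine dvd_add (dvd_add (Finset.dvd_sum fun k _ => ?_) (ha i j)) (hb i j)
  have : (p : ℤ_[p]) ^ (c i j) ∣ (p : ℤ_[p]) ^ (c i k + c k j) :=
    pow_dvd_pow _ (htri i j k)
  exact this.trans (by rw [pow_add]; exact mul_dvd_mul (ha i k) (hb k j))

lemma gammaMem_pow (htri : ∀ i j k, c i j ≤ c i k + c k j)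
    {a : Matrix (Fin n) (Fin n) ℤ_[p]} (ha : gammaMem c a) (N : ℕ) :
    gammaMem c (a ^ N) := by
  induction N with
  | zero => simpa using gammaMem_one c
  | succ N ih => rw [pow_succ]; exact gammaMem_mul c htri ih ha

end aux

/-- `Γ(c)` is closed under taking inverses. -/
theorem stmt_3 (p : ℕ) [Fact p.Prime] (n : ℕ) (hn : 0 < n)
    (c : Fin n → Fin n → ℕ) (hdiag : ∀ i, c i i = 0)
    (htri : ∀ i j k, c i j ≤ c i k + c k j)
    (x : Matrix.GeneralLinearGroup (Fin n) ℤ_[p])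
    (hx : ∀ i j, (p : ℤ_[p]) ^ (c i j) ∣
      ((x : Matrix (Fin n) (Fin n) ℤ_[p]) i j - if i = j then 1 else 0)) :
    ∀ i j, (p : ℤ_[p]) ^ (c i j) ∣
      (((x⁻¹ : Matrix.GeneralLinearGroup (Fin n) ℤ_[p]) :
        Matrix (Fin n) (Fin n) ℤ_[p]) i j - if i = j then 1 else 0) := by
  intro i j
  set m := c i j with hm
  -- the reduction map to `ZMod (p ^ m)`, applied entrywise
  let φ : ℤ_[p] →+* ZMod (p ^ m) := PadicInt.toZModPow m
  let Φ : Matrix (Fin n) (Fin n) ℤ_[p] →+* Matrix (Fin n) (Fin n) (ZMod (p ^ m)) :=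
    φ.mapMatrix
  let g : (Matrix (Fin n) (Fin n) (ZMod (p ^ m)))ˣ := Units.map Φ.toMonoidHom x
  have hNeZero : NeZero (p ^ m) := ⟨pow_ne_zero _ (Fact.out (p := p.Prime)).ne_zero⟩
  set N := orderOf g with hN
  have hNpos : 0 < N := orderOf_pos g
  have hgN : g ^ N = 1 := pow_orderOf_eq_one g
  -- x⁻¹ and x^(N-1) agree mod p^m
  have hinv : Units.map Φ.toMonoidHom (x⁻¹) = g ^ (N - 1) := by
    have : g ^ (N - 1) * g = 1 := by
      rw [← pow_succ, Nat.sub_add_cancel hNpos, hgN]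
    have h2 : g ^ (N - 1) = g⁻¹ := eq_inv_of_mul_eq_one_left this
    rw [map_inv, h2]
  have hentry : φ ((((x⁻¹ : Matrix.GeneralLinearGroup (Fin n) ℤ_[p]) :
      Matrix (Fin n) (Fin n) ℤ_[p]) i j)
      - (((x : Matrix (Fin n) (Fin n) ℤ_[p]) ^ (N - 1)) i j)) = 0 := by
    have h1 : Φ ((x⁻¹ : Matrix.GeneralLinearGroup (Fin n) ℤ_[p]) :
        Matrix (Fin n) (Fin n) ℤ_[p]) = Φ ((x : Matrix (Fin n) (Fin n) ℤ_[p]) ^ (N - 1)) := by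
      have := congrArg Units.val hinv
      simpa [g, Units.val_pow_eq_pow_val, map_pow] using this
    have := congrFun (congrFun (congrArg (fun M => (M : Matrix (Fin n) (Fin n) (ZMod (p ^ m)))) h1) i) j
    simp only [map_sub]
    simpa [Φ, RingHom.mapMatrix_apply, Matrix.map_apply, sub_eq_zero] using this
  have hdvd1 : (p : ℤ_[p]) ^ m ∣
      ((((x⁻¹ : Matrix.GeneralLinearGroup (Fin n) ℤ_[p]) :
      Matrix (Fin n) (Fin n) ℤ_[p]) i j)
      - (((x : Matrix (Fin n) (Fin n) ℤ_[p]) ^ (N - 1)) i j)) := by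
    have hk : _ ∈ RingHom.ker φ := hentry
    rw [PadicInt.ker_toZModPow, Ideal.mem_span_singleton] at hk
    exact hk
  have hdvd2 : (p : ℤ_[p]) ^ m ∣
      ((((x : Matrix (Fin n) (Fin n) ℤ_[p]) ^ (N - 1)) i j) - if i = j then 1 else 0) :=
    gammaMem_pow c htri hx (N - 1) i j
  have := dvd_add hdvd1 hdvd2
  simpa using this
end

section
/- Let p be an odd prime and A a commutative Banach ℚ_p-algebra. Let s : ℤ_pˣ → Aˣ be a continuous character, set T = s(exp(p)) − 1, and suppose c is a positive integer such that |T^{p^{c−1}}| < p^{-1}. Then for all z ∈ 1 + p^c ℤ_p, s(z) is given by a convergent power series in (z − 1) with coefficients in A; explicitly s(z) = Σ_{k≥0} binom(log(z)/p^c, k) · ((1+T)^{p^{c-1}} − 1)^k where log is the p-adic logarithm. -/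
open Filter Topology

namespace Stmt8

lemma nonarch_sum_le {E : Type*} [SeminormedAddCommGroup E]
    (hna : ∀ x y : E, ‖x + y‖ ≤ max ‖x‖ ‖y‖) {ι : Type*} (s : Finset ι) (f : ι → E)
    {C : ℝ} (hC : 0 ≤ C) (h : ∀ i ∈ s, ‖f i‖ ≤ C) : ‖∑ i ∈ s, f i‖ ≤ C := by
  classical
  revert h
  refine Finset.cons_induction_on s (fun _ => by simpa using hC) ?_
  intro a t ha ih h
  rw [Finset.sum_cons]
  exact (hna _ _).trans (max_le (h _ (Finset.mem_cons_self _ _))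
    (ih fun i hi => h i (Finset.mem_cons_of_mem hi)))

lemma norm_hasSum_le {E : Type*} [SeminormedAddCommGroup E] {ι : Type*} {f : ι → E} {a : E}
    {C : ℝ} (hf : HasSum f a) (h : ∀ s : Finset ι, ‖∑ i ∈ s, f i‖ ≤ C) : ‖a‖ ≤ C :=
  le_of_tendsto ((continuous_norm.tendsto a).comp hf) (Eventually.of_forall h)

lemma nonarch_hasSum_le {E : Type*} [SeminormedAddCommGroup E]
    (hna : ∀ x y : E, ‖x + y‖ ≤ max ‖x‖ ‖y‖) {ι : Type*} {f : ι → E} {a : E}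
    {C : ℝ} (hC : 0 ≤ C) (hf : HasSum f a) (h : ∀ i, ‖f i‖ ≤ C) : ‖a‖ ≤ C :=
  norm_hasSum_le hf fun s => nonarch_sum_le hna s f hC fun i _ => h i

variable {p : ℕ} [hp : Fact p.Prime]

lemma padic_nonarch (x y : ℚ_[p]) : ‖x + y‖ ≤ max ‖x‖ ‖y‖ := Padic.nonarchimedean x y

lemma padic_sub_le_max (x y : ℚ_[p]) : ‖x - y‖ ≤ max ‖x‖ ‖y‖ := by
  rw [sub_eq_add_neg]
  simpa using Padic.nonarchimedean x (-y)

lemma norm_natCast_le_one (n : ℕ) : ‖(n : ℚ_[p])‖ ≤ 1 := by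
  simpa using Padic.norm_int_le_one (p := p) (n : ℤ)

lemma norm_natCast_eq {n : ℕ} (hn : n ≠ 0) :
    ‖(n : ℚ_[p])‖ = ((p : ℝ) ^ (n.factorization p))⁻¹ := by
  conv_lhs => rw [show (n : ℚ_[p]) = ((p ^ n.factorization p * (n / p ^ n.factorization p) : ℕ) : ℚ_[p]) by
    rw [Nat.ordProj_mul_ordCompl_eq_self n p]]
  push_cast
  rw [norm_mul, norm_pow, Padic.norm_p]
  have h1 : ‖((n / p ^ n.factorization p : ℕ) : ℚ_[p])‖ = 1 := by
    rcases lt_or_eq_of_le (norm_natCast_le_one (p := p) (n / p ^ n.factorization p)) with hlt | heq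
    · exfalso
      have h2 : ‖(((n / p ^ n.factorization p : ℕ) : ℤ) : ℚ_[p])‖ < 1 := by
        exact_mod_cast hlt
      have h3 := Padic.norm_intCast_lt_one_iff.1 h2
      rw [Int.natCast_dvd_natCast] at h3
      exact Nat.not_dvd_ordCompl hp.out hn h3
    · exact heq
  rw [h1, mul_one, inv_pow]

lemma norm_inv_natCast_le {n : ℕ} (hn : n ≠ 0) : ‖((n : ℚ_[p]))⁻¹‖ ≤ (n : ℝ) := by
  rw [norm_inv, norm_natCast_eq hn, inv_inv]
  exact_mod_cast Nat.ordProj_le p hn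

lemma two_mul_factorization_factorial_le (hp3 : 3 ≤ p) (m : ℕ) :
    2 * (m.factorial).factorization p ≤ m := by
  have h := sub_one_mul_padicValNat_factorial (p := p) m
  have hv : (m.factorial).factorization p = padicValNat p m.factorial :=
    Nat.factorization_def _ hp.out
  calc 2 * (m.factorial).factorization p ≤ (p - 1) * padicValNat p m.factorial := by
        rw [hv]; exact Nat.mul_le_mul_right _ (by omega)
    _ = m - (p.digits m).sum := h
    _ ≤ m := Nat.sub_le _ _

/-- square root of p -/
noncomputable def sp (p : ℕ) : ℝ := Real.sqrt p

lemma sp_nonneg : 0 ≤ sp p := Real.sqrt_nonneg _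

lemma sp_sq : sp p ^ 2 = p := Real.sq_sqrt (by positivity)

lemma one_lt_sp (hp3 : 3 ≤ p) : 1 < sp p := by
  have h1 : (1 : ℝ) < p := by
    have : (1 : ℕ) < p := lt_of_lt_of_le (by norm_num) hp3
    exact_mod_cast this
  calc (1 : ℝ) = Real.sqrt 1 := Real.sqrt_one.symm
    _ < Real.sqrt p := Real.sqrt_lt_sqrt (by norm_num) h1

lemma sp_pos (hp3 : 3 ≤ p) : 0 < sp p := lt_trans one_pos (one_lt_sp hp3)

lemma inv_sp_lt_one (hp3 : 3 ≤ p) : (sp p)⁻¹ < 1 := by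
  rw [inv_lt_one_iff₀]
  right; exact one_lt_sp hp3

lemma sp_mul_inv_p (hp3 : 3 ≤ p) : sp p * (p : ℝ)⁻¹ = (sp p)⁻¹ := by
  have hsp : sp p ≠ 0 := ne_of_gt (sp_pos hp3)
  have h2 : sp p * sp p = (p : ℝ) := by
    have := sp_sq (p := p); nlinarith [this]
  rw [← h2, mul_inv, ← mul_assoc, mul_inv_cancel₀ hsp, one_mul]

lemma norm_inv_factorial_le (hp3 : 3 ≤ p) (m : ℕ) :
    ‖((m.factorial : ℚ_[p]))⁻¹‖ ≤ sp p ^ m := by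
  rw [norm_inv, norm_natCast_eq (Nat.factorial_ne_zero m), inv_inv]
  refine le_of_pow_le_pow_left₀ two_ne_zero (pow_nonneg sp_nonneg m) ?_
  have h1 : ((p : ℝ) ^ (m.factorial).factorization p) ^ 2
      = (p : ℝ) ^ (2 * (m.factorial).factorization p) := by
    rw [← pow_mul, mul_comm]
  have h2 : (sp p ^ m) ^ 2 = (p : ℝ) ^ m := by
    rw [← pow_mul, mul_comm, pow_mul, sp_sq]
  rw [h1, h2]
  refine pow_le_pow_right₀ (by exact_mod_cast le_trans (by norm_num) hp3) ?_
  exact two_mul_factorization_factorial_le hp3 m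

lemma padic_norm_one_add {w : ℚ_[p]} (h : ‖w‖ < 1) : ‖1 + w‖ = 1 := by
  have hne : ‖(1 : ℚ_[p])‖ ≠ ‖w‖ := by rw [norm_one]; exact (ne_of_gt h)
  rw [Padic.add_eq_max_of_ne hne, norm_one]
  exact max_eq_left h.le

/-! ## the exponential -/

noncomputable def Efn (p : ℕ) [Fact p.Prime] (y : ℚ_[p]) : ℚ_[p] :=
  ∑' n : ℕ, ((n.factorial : ℚ_[p]))⁻¹ * y ^ n

lemma exp_term_norm_le (hp3 : 3 ≤ p) {y : ℚ_[p]} (hy : ‖y‖ ≤ (p : ℝ)⁻¹) (n : ℕ) :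
    ‖((n.factorial : ℚ_[p]))⁻¹ * y ^ n‖ ≤ ((sp p)⁻¹) ^ n := by
  rw [norm_mul, norm_pow]
  calc ‖((n.factorial : ℚ_[p]))⁻¹‖ * ‖y‖ ^ n ≤ sp p ^ n * ((p : ℝ)⁻¹) ^ n := by
        refine mul_le_mul (norm_inv_factorial_le hp3 n)
          (pow_le_pow_left₀ (norm_nonneg y) hy n) (by positivity) (pow_nonneg sp_nonneg n)
    _ = (sp p * (p : ℝ)⁻¹) ^ n := (mul_pow _ _ _).symm
    _ = ((sp p)⁻¹) ^ n := by rw [sp_mul_inv_p hp3]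

lemma summable_exp_norm (hp3 : 3 ≤ p) {y : ℚ_[p]} (hy : ‖y‖ ≤ (p : ℝ)⁻¹) :
    Summable fun n => ‖((n.factorial : ℚ_[p]))⁻¹ * y ^ n‖ :=
  Summable.of_nonneg_of_le (fun _ => norm_nonneg _) (exp_term_norm_le hp3 hy)
    (summable_geometric_of_lt_one (inv_nonneg.2 sp_nonneg) (inv_sp_lt_one hp3))

lemma hasSum_Efn (hp3 : 3 ≤ p) {y : ℚ_[p]} (hy : ‖y‖ ≤ (p : ℝ)⁻¹) :
    HasSum (fun n => ((n.factorial : ℚ_[p]))⁻¹ * y ^ n) (Efn p y) :=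
  (Summable.of_norm (summable_exp_norm hp3 hy)).hasSum

lemma Efn_zero : Efn p 0 = 1 := by
  rw [Efn, tsum_eq_single 0]
  · simp
  · intro n hn
    simp [zero_pow hn]

lemma Efn_add (hp3 : 3 ≤ p) {x y : ℚ_[p]} (hx : ‖x‖ ≤ (p : ℝ)⁻¹) (hy : ‖y‖ ≤ (p : ℝ)⁻¹) :
    Efn p (x + y) = Efn p x * Efn p y := by
  rw [Efn, Efn, Efn,
    tsum_mul_tsum_eq_tsum_sum_antidiagonal_of_summable_norm
      (summable_exp_norm hp3 hx) (summable_exp_norm hp3 hy)]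
  refine tsum_congr fun n => ?_
  rw [Finset.Nat.sum_antidiagonal_eq_sum_range_succ_mk, add_pow, Finset.mul_sum]
  refine Finset.sum_congr rfl fun k hk => ?_
  have hkn : k ≤ n := Nat.lt_succ_iff.1 (Finset.mem_range.1 hk)
  rw [Nat.cast_choose ℚ_[p] hkn]
  have h1 : ((k.factorial : ℚ_[p])) ≠ 0 := Nat.cast_ne_zero.2 (Nat.factorial_ne_zero k)
  have h2 : (((n - k).factorial : ℚ_[p])) ≠ 0 := Nat.cast_ne_zero.2 (Nat.factorial_ne_zero _)
  have h3 : ((n.factorial : ℚ_[p])) ≠ 0 := Nat.cast_ne_zero.2 (Nat.factorial_ne_zero n)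
  field_simp
  all_goals ring

lemma Efn_natmul (hp3 : 3 ≤ p) {y : ℚ_[p]} (hy : ‖y‖ ≤ (p : ℝ)⁻¹) (n : ℕ) :
    Efn p ((n : ℚ_[p]) * y) = Efn p y ^ n := by
  induction n with
  | zero => simpa using Efn_zero
  | succ n ih =>
    have hn : ‖(n : ℚ_[p]) * y‖ ≤ (p : ℝ)⁻¹ := by
      rw [norm_mul]
      calc ‖(n : ℚ_[p])‖ * ‖y‖ ≤ 1 * ‖y‖ :=
            mul_le_mul_of_nonneg_right (norm_natCast_le_one n) (norm_nonneg y)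
        _ = ‖y‖ := one_mul _
        _ ≤ (p : ℝ)⁻¹ := hy
    have : ((n + 1 : ℕ) : ℚ_[p]) * y = (n : ℚ_[p]) * y + y := by push_cast; ring
    rw [this, Efn_add hp3 hn hy, ih, pow_succ]

lemma aux_sp_pow_le (hp3 : 3 ≤ p) (m : ℕ) :
    sp p ^ (m + 2) * ((p : ℝ)⁻¹) ^ (m + 1) ≤ 1 := by
  have hp1 : (1 : ℝ) ≤ p := by
    have : (1 : ℕ) ≤ p := le_trans (by norm_num) hp3
    exact_mod_cast this
  have key : sp p ^ (m + 2) ≤ (p : ℝ) ^ (m + 1) := by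
    refine le_of_pow_le_pow_left₀ two_ne_zero (by positivity) ?_
    have h1 : (sp p ^ (m + 2)) ^ 2 = (p : ℝ) ^ (m + 2) := by
      rw [← pow_mul, mul_comm (m + 2) 2, pow_mul, sp_sq]
    have h2 : ((p : ℝ) ^ (m + 1)) ^ 2 = (p : ℝ) ^ ((m + 1) * 2) := by rw [← pow_mul]
    rw [h1, h2]
    exact pow_le_pow_right₀ hp1 (by omega)
  calc sp p ^ (m + 2) * ((p : ℝ)⁻¹) ^ (m + 1)
      ≤ (p : ℝ) ^ (m + 1) * ((p : ℝ)⁻¹) ^ (m + 1) :=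
        mul_le_mul_of_nonneg_right key (by positivity)
    _ = 1 := by
        rw [← mul_pow, mul_inv_cancel₀ (by positivity : (p : ℝ) ≠ 0), one_pow]

lemma Efn_sub_one_norm_le (hp3 : 3 ≤ p) {y : ℚ_[p]} (hy : ‖y‖ ≤ (p : ℝ)⁻¹) :
    ‖Efn p y - 1‖ ≤ ‖y‖ := by
  have hs := hasSum_Efn hp3 hy
  have h1 : HasSum (fun n => (((n + 1).factorial : ℚ_[p]))⁻¹ * y ^ (n + 1)) (Efn p y - 1) := by
    refine (hasSum_nat_add_iff (f := fun n => ((n.factorial : ℚ_[p]))⁻¹ * y ^ n) 1).2 ?_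
    simpa [Nat.factorial] using hs
  refine nonarch_hasSum_le padic_nonarch (norm_nonneg y) h1 fun n => ?_
  cases n with
  | zero => simp [Nat.factorial]
  | succ m =>
    rw [norm_mul, norm_pow]
    have h1 : ‖(((m + 1 + 1).factorial : ℚ_[p]))⁻¹‖ ≤ sp p ^ (m + 2) :=
      norm_inv_factorial_le hp3 (m + 2)
    have h2 : ‖y‖ ^ (m + 1 + 1) ≤ ((p : ℝ)⁻¹) ^ (m + 1) * ‖y‖ := by
      rw [pow_succ]
      exact mul_le_mul_of_nonneg_right (pow_le_pow_left₀ (norm_nonneg y) hy (m + 1))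
        (norm_nonneg y)
    calc ‖(((m + 1 + 1).factorial : ℚ_[p]))⁻¹‖ * ‖y‖ ^ (m + 1 + 1)
        ≤ sp p ^ (m + 2) * (((p : ℝ)⁻¹) ^ (m + 1) * ‖y‖) :=
          mul_le_mul h1 h2 (by positivity) (pow_nonneg sp_nonneg _)
      _ = (sp p ^ (m + 2) * ((p : ℝ)⁻¹) ^ (m + 1)) * ‖y‖ := by ring
      _ ≤ 1 * ‖y‖ := mul_le_mul_of_nonneg_right (aux_sp_pow_le hp3 m) (norm_nonneg y)
      _ = ‖y‖ := one_mul _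

lemma Efn_norm_eq_one (hp3 : 3 ≤ p) {y : ℚ_[p]} (hy : ‖y‖ ≤ (p : ℝ)⁻¹) : ‖Efn p y‖ = 1 := by
  have hplt : (p : ℝ)⁻¹ < 1 := by
    rw [inv_lt_one_iff₀]; right; exact_mod_cast lt_of_lt_of_le (by norm_num) hp3
  have h1 : ‖Efn p y - 1‖ < 1 := lt_of_le_of_lt ((Efn_sub_one_norm_le hp3 hy).trans hy) hplt
  have h2 : Efn p y = 1 + (Efn p y - 1) := by ring
  rw [h2, padic_norm_one_add h1]

lemma Efn_mul_Efn_neg (hp3 : 3 ≤ p) {y : ℚ_[p]} (hy : ‖y‖ ≤ (p : ℝ)⁻¹) :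
    Efn p y * Efn p (-y) = 1 := by
  rw [← Efn_add hp3 hy (by simpa using hy), add_neg_cancel, Efn_zero]

lemma exp_eq_Efn (y : ℚ_[p]) : NormedSpace.exp y = Efn p y := by
  rw [NormedSpace.exp_eq_tsum (𝕂 := ℚ_[p]), Efn]
  simp [smul_eq_mul]

lemma tendsto_Efn (hp3 : 3 ≤ p) {g : ℕ → ℚ_[p]} {y : ℚ_[p]}
    (hg : ∀ j, ‖g j‖ ≤ (p : ℝ)⁻¹) (hy : ‖y‖ ≤ (p : ℝ)⁻¹)
    (hlim : Tendsto g atTop (𝓝 y)) :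
    Tendsto (fun j => Efn p (g j)) atTop (𝓝 (Efn p y)) := by
  have := tendsto_tsum_of_dominated_convergence
    (f := fun j n => ((n.factorial : ℚ_[p]))⁻¹ * (g j) ^ n)
    (g := fun n => ((n.factorial : ℚ_[p]))⁻¹ * y ^ n)
    (bound := fun n => ((sp p)⁻¹) ^ n)
    (summable_geometric_of_lt_one (inv_nonneg.2 sp_nonneg) (inv_sp_lt_one hp3))
    (fun n => Filter.Tendsto.const_mul _ (hlim.pow n))
    (Eventually.of_forall fun j => fun n => exp_term_norm_le hp3 (hg j) n)
  exact this


open PowerSeries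

def aQ : ℕ → ℚ
  | 0 => 0
  | n + 1 => (-1) ^ n / (n + 1)

noncomputable def φQ : PowerSeries ℚ := PowerSeries.mk aQ

noncomputable def bQ (m N : ℕ) : ℚ := PowerSeries.coeff N (φQ ^ m)

noncomputable def dQ (N : ℕ) : ℚ :=
  ∑ m ∈ Finset.range (N + 1), ((m.factorial : ℚ))⁻¹ * bQ m N

lemma constantCoeff_φQ : PowerSeries.constantCoeff φQ = 0 := by
  have : (PowerSeries.coeff 0) φQ = 0 := by simp [φQ, aQ]
  simpa [PowerSeries.coeff_zero_eq_constantCoeff] using this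

lemma coeff_pow_mul_eq_zero {ψ : PowerSeries ℚ} {k N : ℕ} (h : N < k) :
    PowerSeries.coeff N (φQ ^ k * ψ) = 0 := by
  obtain ⟨ρ, hρ⟩ := PowerSeries.X_dvd_iff.2 constantCoeff_φQ
  rw [hρ, mul_pow, mul_assoc, PowerSeries.coeff_X_pow_mul', if_neg (not_le.2 h)]

lemma bQ_eq_zero {m N : ℕ} (h : N < m) : bQ m N = 0 := by
  have := coeff_pow_mul_eq_zero (ψ := 1) h
  simpa [bQ] using this

noncomputable def DφQ : PowerSeries ℚ := PowerSeries.derivative ℚ φQ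

lemma coeff_DφQ (N : ℕ) : PowerSeries.coeff N DφQ = (-1) ^ N := by
  rw [DφQ, PowerSeries.coeff_derivative]
  have h1 : (PowerSeries.coeff (N + 1)) φQ = (-1) ^ N / (N + 1) := by
    simp [φQ, aQ]
  rw [h1, div_mul_cancel₀]
  exact_mod_cast Nat.succ_ne_zero N

lemma one_add_X_mul_DφQ : (1 + PowerSeries.X) * DφQ = 1 := by
  ext N
  rw [add_mul, one_mul, map_add, PowerSeries.coeff_one]
  cases N with
  | zero =>
    have h0 : (PowerSeries.coeff 0) (PowerSeries.X * DφQ) = 0 := by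
      rw [PowerSeries.coeff_zero_eq_constantCoeff, map_mul]
      simp
    rw [h0, coeff_DφQ]
    norm_num
  | succ N =>
    rw [PowerSeries.coeff_succ_X_mul, coeff_DφQ, coeff_DφQ, if_neg (Nat.succ_ne_zero N)]
    ring

noncomputable def cQ (k N : ℕ) : ℚ := PowerSeries.coeff N (φQ ^ k * DφQ)

lemma cQ_eq_zero {k N : ℕ} (h : N < k) : cQ k N = 0 := coeff_pow_mul_eq_zero h

lemma alphaQ (m N : ℕ) :
    bQ (m + 1) (N + 1) * ((N : ℚ) + 1) = ((m : ℚ) + 1) * cQ m N := by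
  have hD : (PowerSeries.derivative ℚ) (φQ ^ (m + 1)) = (m + 1) • (φQ ^ m • DφQ) := by
    rw [Derivation.leibniz_pow]
    norm_num [DφQ]
  have h1 := congrArg (fun f => PowerSeries.coeff N f) hD
  rw [PowerSeries.coeff_derivative, map_nsmul, nsmul_eq_mul] at h1
  simp only [smul_eq_mul] at h1
  rw [show bQ (m + 1) (N + 1) = PowerSeries.coeff (N + 1) (φQ ^ (m + 1)) from rfl,
    show cQ m N = PowerSeries.coeff N (φQ ^ m * DφQ) from rfl]
  rw [h1]
  push_cast
  ring

lemma betaQ (k N : ℕ) : bQ k (N + 1) = cQ k (N + 1) + cQ k N := by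
  have h1 : φQ ^ k = φQ ^ k * DφQ + PowerSeries.X * (φQ ^ k * DφQ) := by
    conv_lhs => rw [show φQ ^ k = φQ ^ k * ((1 + PowerSeries.X) * DφQ) by
      rw [one_add_X_mul_DφQ, mul_one]]
    ring
  have h2 := congrArg (fun f => PowerSeries.coeff (N + 1) f) h1
  simp only [map_add] at h2
  rw [show bQ k (N + 1) = PowerSeries.coeff (N + 1) (φQ ^ k) from rfl, h2,
    PowerSeries.coeff_succ_X_mul]
  rfl

lemma gammaQ (N : ℕ) :
    ((N : ℚ) + 1) * dQ (N + 1) =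
      ∑ k ∈ Finset.range (N + 1), ((k.factorial : ℚ))⁻¹ * cQ k N := by
  rw [dQ, Finset.mul_sum, Finset.sum_range_succ']
  have h0 : bQ 0 (N + 1) = 0 := by
    simp [bQ, PowerSeries.coeff_one]
  rw [h0]
  simp only [mul_zero, add_zero]
  refine Finset.sum_congr rfl fun m _ => ?_
  have hb := alphaQ m N
  have hfac : (((m+1).factorial : ℚ)) = ((m : ℚ) + 1) * (m.factorial : ℚ) := by
    rw [Nat.factorial_succ]; push_cast; ring
  have hm1 : ((m : ℚ) + 1) ≠ 0 := by positivity
  have key : (((m+1).factorial : ℚ))⁻¹ * ((m : ℚ) + 1) = ((m.factorial : ℚ))⁻¹ := by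
    rw [hfac, mul_inv, mul_comm (((m : ℚ) + 1))⁻¹, mul_assoc,
      inv_mul_cancel₀ hm1, mul_one]
  calc ((N : ℚ) + 1) * ((((m+1).factorial : ℚ))⁻¹ * bQ (m+1) (N+1))
      = (((m+1).factorial : ℚ))⁻¹ * (bQ (m+1) (N+1) * ((N : ℚ) + 1)) := by ring
    _ = (((m+1).factorial : ℚ))⁻¹ * (((m : ℚ) + 1) * cQ m N) := by rw [hb]
    _ = ((((m+1).factorial : ℚ))⁻¹ * ((m : ℚ) + 1)) * cQ m N := by ring
    _ = ((m.factorial : ℚ))⁻¹ * cQ m N := by rw [key]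

lemma recQ (M : ℕ) : ((M : ℚ) + 2) * dQ (M + 2) = -(M : ℚ) * dQ (M + 1) := by
  have hd : dQ (M + 1) = (∑ k ∈ Finset.range (M + 2), ((k.factorial : ℚ))⁻¹ * cQ k (M + 1))
      + ∑ k ∈ Finset.range (M + 1), ((k.factorial : ℚ))⁻¹ * cQ k M := by
    rw [dQ]
    have hsplit : ∀ m ∈ Finset.range (M + 2), ((m.factorial : ℚ))⁻¹ * bQ m (M + 1) =
        ((m.factorial : ℚ))⁻¹ * cQ m (M + 1) + ((m.factorial : ℚ))⁻¹ * cQ m M := by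
      intro m _
      rw [betaQ]; ring
    rw [Finset.sum_congr rfl hsplit, Finset.sum_add_distrib]
    congr 1
    rw [Finset.sum_range_succ, cQ_eq_zero (Nat.lt_succ_self M)]
    simp
  have hg1 := gammaQ (M + 1)
  have hg2 := gammaQ M
  have hcast : ((M + 1 : ℕ) : ℚ) + 1 = (M : ℚ) + 2 := by push_cast; ring
  rw [hcast] at hg1
  have e1 : M + 1 + 1 = M + 2 := rfl
  rw [e1] at hg1
  rw [← hg1, ← hg2] at hd
  linarith [hd]

lemma dQ_zero : dQ 0 = 1 := by
  simp [dQ, bQ, Nat.factorial]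

lemma dQ_one : dQ 1 = 1 := by
  rw [dQ, Finset.sum_range_succ, Finset.sum_range_one]
  have h0 : bQ 0 1 = 0 := by simp [bQ, PowerSeries.coeff_one]
  have h1 : bQ 1 1 = 1 := by simp [bQ, φQ, aQ]
  rw [h0, h1]
  norm_num [Nat.factorial]

lemma dQ_add_two (M : ℕ) : dQ (M + 2) = 0 := by
  induction M with
  | zero =>
    have h := recQ 0
    norm_num at h
    exact h
  | succ M ih =>
    have h := recQ (M + 1)
    have e1 : M + 1 + 2 = M + 3 := rfl
    have e2 : M + 1 + 1 = M + 2 := rfl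
    rw [e1, e2, ih, mul_zero] at h
    have h3 : ((M + 1 : ℕ) : ℚ) + 2 ≠ 0 := by positivity
    have := (mul_eq_zero.1 h).resolve_left h3
    simpa [e1] using this

lemma dQ_eq (N : ℕ) : dQ N = if N = 0 then 1 else if N = 1 then 1 else 0 := by
  match N with
  | 0 => simpa using dQ_zero
  | 1 => simpa using dQ_one
  | (M + 2) => simpa using dQ_add_two M

/-! ## Part 3: the logarithm series and its composition with exp -/

lemma norm_aQ_le (n : ℕ) : ‖(aQ n : ℚ_[p])‖ ≤ (2 : ℝ) ^ n / 2 := by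
  cases n with
  | zero =>
    show ‖((0 : ℚ) : ℚ_[p])‖ ≤ _
    norm_num
  | succ m =>
    have e : (aQ (m + 1) : ℚ_[p]) = ((-1 : ℚ_[p])) ^ m * (((m + 1 : ℕ) : ℚ_[p]))⁻¹ := by
      show (((-1) ^ m / ((m : ℚ) + 1) : ℚ) : ℚ_[p]) = _
      push_cast
      ring
    rw [e, norm_mul, norm_pow, norm_neg, norm_one, one_pow, one_mul]
    refine le_trans (norm_inv_natCast_le (Nat.succ_ne_zero m)) ?_
    have h4 : m + 1 ≤ 2 ^ m := Nat.lt_two_pow_self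
    have h3 : ((m + 1 : ℕ) : ℝ) ≤ (2 : ℝ) ^ m := by exact_mod_cast h4
    have h5 : (2 : ℝ) ^ m = (2 : ℝ) ^ (m + 1) / 2 := by rw [pow_succ]; ring
    calc ((m + 1 : ℕ) : ℝ) ≤ (2 : ℝ) ^ m := h3
      _ = (2 : ℝ) ^ (m + 1) / 2 := h5

lemma norm_bQ_le (m N : ℕ) : ‖(bQ m N : ℚ_[p])‖ ≤ (2 : ℝ) ^ N / 2 ^ m := by
  induction m generalizing N with
  | zero =>
    have e : bQ 0 N = if N = 0 then 1 else 0 := by simp [bQ, PowerSeries.coeff_one]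
    rw [e]
    rcases eq_or_ne N 0 with h | h
    · subst h
      rw [if_pos rfl]
      norm_num
    · rw [if_neg h, Rat.cast_zero, norm_zero]
      positivity
  | succ m ih =>
    have e : bQ (m + 1) N = ∑ ij ∈ Finset.HasAntidiagonal.antidiagonal N, bQ m ij.1 * aQ ij.2 := by
      rw [bQ, pow_succ, PowerSeries.coeff_mul]
      refine Finset.sum_congr rfl fun ij _ => ?_
      have e1 : PowerSeries.coeff ij.1 (φQ ^ m) = bQ m ij.1 := rfl
      have e2 : PowerSeries.coeff ij.2 φQ = aQ ij.2 := PowerSeries.coeff_mk _ _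
      rw [e1, e2]
    rw [e]
    push_cast
    refine nonarch_sum_le padic_nonarch _ _ (by positivity) ?_
    intro ij hij
    have hsum : ij.1 + ij.2 = N := Finset.HasAntidiagonal.mem_antidiagonal.1 hij
    rw [norm_mul]
    calc ‖(bQ m ij.1 : ℚ_[p])‖ * ‖(aQ ij.2 : ℚ_[p])‖
        ≤ ((2 : ℝ) ^ ij.1 / 2 ^ m) * ((2 : ℝ) ^ ij.2 / 2) :=
          mul_le_mul (ih ij.1) (norm_aQ_le ij.2) (norm_nonneg _) (by positivity)
      _ = (2 : ℝ) ^ N / 2 ^ (m + 1) := by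
          rw [← hsum, pow_add, pow_succ]
          ring

noncomputable def ellFn (p : ℕ) [Fact p.Prime] (t : ℚ_[p]) : ℚ_[p] :=
  ∑' n : ℕ, (aQ n : ℚ_[p]) * t ^ n

lemma inv_p_le_third (hp3 : 3 ≤ p) : (p : ℝ)⁻¹ ≤ 3⁻¹ := by
  have h3 : (3 : ℝ) ≤ p := by exact_mod_cast hp3
  rw [inv_le_inv₀ (by positivity) (by norm_num)]
  exact h3

lemma ell_term_norm_le (hp3 : 3 ≤ p) {t : ℚ_[p]} (ht : ‖t‖ ≤ (p : ℝ)⁻¹) (n : ℕ) :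
    ‖(aQ n : ℚ_[p]) * t ^ n‖ ≤ ((2 : ℝ) / 3) ^ n / 2 := by
  rw [norm_mul, norm_pow]
  calc ‖(aQ n : ℚ_[p])‖ * ‖t‖ ^ n ≤ ((2 : ℝ) ^ n / 2) * ((3 : ℝ)⁻¹) ^ n := by
        refine mul_le_mul (norm_aQ_le n) (pow_le_pow_left₀ (norm_nonneg t)
          (le_trans ht (inv_p_le_third hp3)) n) (by positivity) (by positivity)
    _ = ((2 : ℝ) / 3) ^ n / 2 := by
        rw [div_pow, inv_pow]
        ring

lemma summable_ell_norm (hp3 : 3 ≤ p) {t : ℚ_[p]} (ht : ‖t‖ ≤ (p : ℝ)⁻¹) :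
    Summable fun n => ‖(aQ n : ℚ_[p]) * t ^ n‖ := by
  refine Summable.of_nonneg_of_le (fun _ => norm_nonneg _) (ell_term_norm_le hp3 ht) ?_
  exact (summable_geometric_of_lt_one (by norm_num) (by norm_num)).div_const 2

lemma hasSum_ellFn (hp3 : 3 ≤ p) {t : ℚ_[p]} (ht : ‖t‖ ≤ (p : ℝ)⁻¹) :
    HasSum (fun n => (aQ n : ℚ_[p]) * t ^ n) (ellFn p t) :=
  (Summable.of_norm (summable_ell_norm hp3 ht)).hasSum

lemma norm_ellFn_le (hp3 : 3 ≤ p) {t : ℚ_[p]} (ht : ‖t‖ ≤ (p : ℝ)⁻¹) :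
    ‖ellFn p t‖ ≤ ‖t‖ := by
  refine nonarch_hasSum_le padic_nonarch (norm_nonneg t) (hasSum_ellFn hp3 ht) fun n => ?_
  cases n with
  | zero =>
    show ‖((0 : ℚ) : ℚ_[p]) * _‖ ≤ _
    simp
  | succ m =>
    rw [norm_mul, norm_pow]
    have hp0 : (0 : ℝ) < p := by
      have := hp.out.pos; exact_mod_cast this
    have h1 : ‖t‖ ^ (m + 1) ≤ ((p : ℝ)⁻¹) ^ m * ‖t‖ := by
      rw [pow_succ]
      exact mul_le_mul_of_nonneg_right (pow_le_pow_left₀ (norm_nonneg t) ht m) (norm_nonneg t)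
    have h2 : (2 : ℝ) ^ (m + 1) / 2 = 2 ^ m := by rw [pow_succ]; ring
    have h3 : (2 : ℝ) * (p : ℝ)⁻¹ ≤ 1 := by
      have h4 : (2 : ℝ) * (p : ℝ)⁻¹ = 2 / p := by ring
      rw [h4, div_le_one hp0]
      exact_mod_cast le_trans (by norm_num : (2:ℕ) ≤ 3) hp3
    calc ‖(aQ (m + 1) : ℚ_[p])‖ * ‖t‖ ^ (m + 1)
        ≤ ((2 : ℝ) ^ (m + 1) / 2) * (((p : ℝ)⁻¹) ^ m * ‖t‖) :=
          mul_le_mul (norm_aQ_le _) h1 (by positivity) (by positivity)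
      _ = ((2 : ℝ) ^ m * ((p : ℝ)⁻¹) ^ m) * ‖t‖ := by rw [h2]; ring
      _ = ((2 : ℝ) * (p : ℝ)⁻¹) ^ m * ‖t‖ := by rw [mul_pow]
      _ ≤ 1 ^ m * ‖t‖ :=
          mul_le_mul_of_nonneg_right (pow_le_pow_left₀ (by positivity) h3 m) (norm_nonneg t)
      _ = ‖t‖ := by rw [one_pow, one_mul]

lemma summable_bQ_norm (hp3 : 3 ≤ p) {t : ℚ_[p]} (ht : ‖t‖ ≤ (p : ℝ)⁻¹) (m : ℕ) :
    Summable fun N => ‖(bQ m N : ℚ_[p]) * t ^ N‖ := by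
  refine Summable.of_nonneg_of_le (fun _ => norm_nonneg _) (fun N => ?_)
    (((summable_geometric_of_lt_one (by norm_num : (0:ℝ) ≤ 2/3) (by norm_num)).div_const
      (2 ^ m)))
  rw [norm_mul, norm_pow]
  calc ‖(bQ m N : ℚ_[p])‖ * ‖t‖ ^ N
      ≤ ((2 : ℝ) ^ N / 2 ^ m) * ((3 : ℝ)⁻¹) ^ N := by
        refine mul_le_mul (norm_bQ_le m N) (pow_le_pow_left₀ (norm_nonneg t)
          (le_trans ht (inv_p_le_third hp3)) N) (by positivity) (by positivity)
    _ = ((2 : ℝ) / 3) ^ N / 2 ^ m := by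
        rw [div_pow, inv_pow]
        ring

lemma hasSum_pow_ellFn (hp3 : 3 ≤ p) {t : ℚ_[p]} (ht : ‖t‖ ≤ (p : ℝ)⁻¹) (m : ℕ) :
    HasSum (fun N => (bQ m N : ℚ_[p]) * t ^ N) (ellFn p t ^ m) := by
  induction m with
  | zero =>
    have h0 : ∀ N : ℕ, N ≠ 0 → (bQ 0 N : ℚ_[p]) * t ^ N = 0 := by
      intro N hN
      have : bQ 0 N = 0 := by simp [bQ, PowerSeries.coeff_one, hN]
      rw [this]
      simp
    have := hasSum_single (f := fun N => (bQ 0 N : ℚ_[p]) * t ^ N) 0 (fun N h => h0 N h)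
    have e : (bQ 0 0 : ℚ_[p]) * t ^ 0 = 1 := by
      have : bQ 0 0 = 1 := by simp [bQ]
      rw [this]; simp
    rw [e] at this
    simpa using this
  | succ m ih =>
    have hS : Summable (fun N => (bQ (m + 1) N : ℚ_[p]) * t ^ N) :=
      Summable.of_norm (summable_bQ_norm hp3 ht (m + 1))
    have key := tsum_mul_tsum_eq_tsum_sum_antidiagonal_of_summable_norm
      (summable_bQ_norm hp3 ht m) (summable_ell_norm hp3 ht)
    have inner : ∀ N, (∑ ij ∈ Finset.HasAntidiagonal.antidiagonal N,
        ((bQ m ij.1 : ℚ_[p]) * t ^ ij.1) * ((aQ ij.2 : ℚ_[p]) * t ^ ij.2))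
        = (bQ (m + 1) N : ℚ_[p]) * t ^ N := by
      intro N
      have e : bQ (m + 1) N = ∑ ij ∈ Finset.HasAntidiagonal.antidiagonal N, bQ m ij.1 * aQ ij.2 := by
        rw [bQ, pow_succ, PowerSeries.coeff_mul]
        refine Finset.sum_congr rfl fun ij _ => ?_
        have e1 : PowerSeries.coeff ij.1 (φQ ^ m) = bQ m ij.1 := rfl
        have e2 : PowerSeries.coeff ij.2 φQ = aQ ij.2 := PowerSeries.coeff_mk _ _
        rw [e1, e2]
      rw [e]
      push_cast
      rw [Finset.sum_mul]
      refine Finset.sum_congr rfl fun ij hij => ?_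
      have hsum : ij.1 + ij.2 = N := Finset.HasAntidiagonal.mem_antidiagonal.1 hij
      rw [← hsum, pow_add]
      ring
    have ht1 : (∑' N, (bQ (m + 1) N : ℚ_[p]) * t ^ N) = ellFn p t ^ m * ellFn p t := by
      rw [← ih.tsum_eq, ← (hasSum_ellFn hp3 ht).tsum_eq, key]
      exact tsum_congr fun N => (inner N).symm
    have := hS.hasSum
    rw [ht1] at this
    rw [pow_succ]
    exact this

/-- the square root of 2/3 -/
noncomputable def wgeo : ℝ := Real.sqrt (2 / 3)

lemma wgeo_nonneg : 0 ≤ wgeo := Real.sqrt_nonneg _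

lemma wgeo_sq : wgeo ^ 2 = 2 / 3 := Real.sq_sqrt (by norm_num)

lemma wgeo_lt_one : wgeo < 1 := by
  have h := wgeo_sq
  nlinarith [wgeo_nonneg]

lemma inv_sp_le_23 (hp3 : 3 ≤ p) : (sp p)⁻¹ ≤ 2 / 3 := by
  refine le_of_pow_le_pow_left₀ two_ne_zero (by norm_num) ?_
  have h1 : ((sp p)⁻¹) ^ 2 = (p : ℝ)⁻¹ := by
    rw [inv_pow, sp_sq]
  rw [h1]
  calc (p : ℝ)⁻¹ ≤ 3⁻¹ := inv_p_le_third hp3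
    _ ≤ (2 / 3 : ℝ) ^ 2 := by norm_num

lemma exp_ell_F_bound (hp3 : 3 ≤ p) {t : ℚ_[p]} (ht : ‖t‖ ≤ (p : ℝ)⁻¹) (q : ℕ × ℕ) :
    ‖((q.1.factorial : ℚ_[p]))⁻¹ * ((bQ q.1 q.2 : ℚ_[p]) * t ^ q.2)‖ ≤ wgeo ^ q.1 * wgeo ^ q.2 := by
  obtain ⟨m, N⟩ := q
  rcases le_or_gt m N with hmN | hNm
  · obtain ⟨r, rfl⟩ : ∃ r, N = m + r := ⟨N - m, by omega⟩
    have h23 : (0:ℝ) ≤ 2/3 := by norm_num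
    have step1 : ‖((m.factorial : ℚ_[p]))⁻¹ * ((bQ m (m + r) : ℚ_[p]) * t ^ (m + r))‖
        ≤ sp p ^ m * (((2 : ℝ) ^ (m + r) / 2 ^ m) * ((p : ℝ)⁻¹) ^ (m + r)) := by
      rw [norm_mul, norm_mul, norm_pow]
      refine mul_le_mul (norm_inv_factorial_le hp3 m) ?_ (by positivity)
        (pow_nonneg sp_nonneg m)
      refine mul_le_mul (norm_bQ_le m (m + r)) (pow_le_pow_left₀ (norm_nonneg t) ht (m + r))
        (by positivity) (by positivity)
    have step2 : sp p ^ m * (((2 : ℝ) ^ (m + r) / 2 ^ m) * ((p : ℝ)⁻¹) ^ (m + r))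
        = ((sp p)⁻¹) ^ m * ((2 : ℝ) * (p : ℝ)⁻¹) ^ r := by
      have e1 : (2 : ℝ) ^ (m + r) / 2 ^ m = 2 ^ r := by
        rw [pow_add]; field_simp
      rw [e1, pow_add, mul_pow]
      rw [← sp_mul_inv_p hp3, mul_pow]
      ring
    have h2p : (2 : ℝ) * (p : ℝ)⁻¹ ≤ 2 / 3 := by
      have := inv_p_le_third (p := p) hp3
      nlinarith
    have step3 : ((sp p)⁻¹) ^ m * ((2 : ℝ) * (p : ℝ)⁻¹) ^ r ≤ (2 / 3 : ℝ) ^ m * (2 / 3 : ℝ) ^ r := by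
      refine mul_le_mul (pow_le_pow_left₀ (inv_nonneg.2 sp_nonneg) (inv_sp_le_23 hp3) m)
        (pow_le_pow_left₀ (by positivity) h2p r) (by positivity) (by positivity)
    have step4 : (2 / 3 : ℝ) ^ m * (2 / 3 : ℝ) ^ r = wgeo ^ (2 * (m + r)) := by
      rw [← pow_add, pow_mul, wgeo_sq]
    have step5 : wgeo ^ (2 * (m + r)) ≤ wgeo ^ m * wgeo ^ (m + r) := by
      rw [← pow_add]
      exact pow_le_pow_of_le_one wgeo_nonneg wgeo_lt_one.le (by omega)
    calc ‖((m.factorial : ℚ_[p]))⁻¹ * ((bQ m (m + r) : ℚ_[p]) * t ^ (m + r))‖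
        ≤ sp p ^ m * (((2 : ℝ) ^ (m + r) / 2 ^ m) * ((p : ℝ)⁻¹) ^ (m + r)) := step1
      _ = ((sp p)⁻¹) ^ m * ((2 : ℝ) * (p : ℝ)⁻¹) ^ r := step2
      _ ≤ (2 / 3 : ℝ) ^ m * (2 / 3 : ℝ) ^ r := step3
      _ = wgeo ^ (2 * (m + r)) := step4
      _ ≤ wgeo ^ m * wgeo ^ (m + r) := step5
  · have hb : bQ m N = 0 := bQ_eq_zero hNm
    rw [hb]
    show ‖_ * (((0:ℚ) : ℚ_[p]) * _)‖ ≤ _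
    simp only [Rat.cast_zero, zero_mul, mul_zero, norm_zero]
    exact mul_nonneg (pow_nonneg wgeo_nonneg _) (pow_nonneg wgeo_nonneg _)

set_option maxHeartbeats 1000000 in
lemma hasSum_exp_ell (hp3 : 3 ≤ p) {t : ℚ_[p]} (ht : ‖t‖ ≤ (p : ℝ)⁻¹) :
    HasSum (fun m => ((m.factorial : ℚ_[p]))⁻¹ * ellFn p t ^ m) (1 + t) := by
  set F : ℕ × ℕ → ℚ_[p] :=
    fun q => ((q.1.factorial : ℚ_[p]))⁻¹ * ((bQ q.1 q.2 : ℚ_[p]) * t ^ q.2) with hF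
  have hFnorm : Summable fun q => ‖F q‖ := by
    refine Summable.of_nonneg_of_le (fun _ => norm_nonneg _) (exp_ell_F_bound hp3 ht) ?_
    exact Summable.mul_of_nonneg
      (summable_geometric_of_lt_one wgeo_nonneg wgeo_lt_one)
      (summable_geometric_of_lt_one wgeo_nonneg wgeo_lt_one)
      (fun _ => pow_nonneg wgeo_nonneg _) (fun _ => pow_nonneg wgeo_nonneg _)
  have hSF : Summable F := Summable.of_norm hFnorm
  have hW : HasSum F (∑' q, F q) := hSF.hasSum
  have hrow : ∀ m, HasSum (fun N => F (m, N)) (((m.factorial : ℚ_[p]))⁻¹ * ellFn p t ^ m) :=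
    fun m => (hasSum_pow_ellFn hp3 ht m).mul_left _
  have h1 : HasSum (fun m => ((m.factorial : ℚ_[p]))⁻¹ * ellFn p t ^ m) (∑' q, F q) :=
    HasSum.prod_fiberwise hW hrow
  have hFe : HasSum (F ∘ (Equiv.prodComm ℕ ℕ)) (∑' q, F q) :=
    (Equiv.hasSum_iff (Equiv.prodComm ℕ ℕ)).2 hW
  have hcol : ∀ N, HasSum (fun m => (F ∘ (Equiv.prodComm ℕ ℕ)) (N, m)) ((dQ N : ℚ_[p]) * t ^ N) := by
    intro N
    have hzero : ∀ m ∉ Finset.range (N + 1), (F ∘ (Equiv.prodComm ℕ ℕ)) (N, m) = 0 := by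
      intro m hm
      have hNm : N < m := by
        simpa [Nat.lt_succ_iff, not_le] using hm
      show ((m.factorial : ℚ_[p]))⁻¹ * ((bQ m N : ℚ_[p]) * t ^ N) = 0
      rw [bQ_eq_zero hNm]
      simp
    have : HasSum _ _ := hasSum_sum_of_ne_finset_zero hzero
    have e : (∑ m ∈ Finset.range (N + 1), (F ∘ (Equiv.prodComm ℕ ℕ)) (N, m))
        = (dQ N : ℚ_[p]) * t ^ N := by
      show (∑ m ∈ Finset.range (N + 1),
        ((m.factorial : ℚ_[p]))⁻¹ * ((bQ m N : ℚ_[p]) * t ^ N)) = _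
      rw [dQ]
      push_cast
      rw [Finset.sum_mul]
      refine Finset.sum_congr rfl fun m _ => ?_
      ring
    rw [e] at this
    exact this
  have h2 : HasSum (fun N => (dQ N : ℚ_[p]) * t ^ N) (∑' q, F q) :=
    HasSum.prod_fiberwise hFe hcol
  have hfun : (fun N => (dQ N : ℚ_[p]) * t ^ N)
      = fun N => if N = 0 then 1 else if N = 1 then t else 0 := by
    funext N
    rw [dQ_eq]
    rcases eq_or_ne N 0 with h | h
    · subst h; norm_num
    · rcases eq_or_ne N 1 with h1 | h1
      · subst h1; norm_num
      · rw [if_neg h, if_neg h1, if_neg h, if_neg h1]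
        simp
  rw [hfun] at h2
  have h3 : HasSum (fun N => if N = 0 then (1 : ℚ_[p]) else if N = 1 then t else 0) (1 + t) := by
    have hzero : ∀ N ∉ ({0, 1} : Finset ℕ),
        (if N = 0 then (1 : ℚ_[p]) else if N = 1 then t else 0) = 0 := by
      intro N hN
      simp only [Finset.mem_insert, Finset.mem_singleton] at hN
      push_neg at hN
      rw [if_neg hN.1, if_neg hN.2]
    have : HasSum _ _ := hasSum_sum_of_ne_finset_zero hzero
    have e : (∑ N ∈ ({0, 1} : Finset ℕ),
        (if N = 0 then (1 : ℚ_[p]) else if N = 1 then t else 0)) = 1 + t := by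
      rw [Finset.sum_pair (by norm_num : (0 : ℕ) ≠ 1)]
      norm_num
    rw [e] at this
    exact this
  have hWeq : (∑' q, F q) = 1 + t := h2.unique h3
  rw [hWeq] at h1
  exact h1

lemma Efn_ellFn (hp3 : 3 ≤ p) {t : ℚ_[p]} (ht : ‖t‖ ≤ (p : ℝ)⁻¹) :
    Efn p (ellFn p t) = 1 + t :=
  (hasSum_exp_ell hp3 ht).tsum_eq

/-! ## A-side lemmas -/

section Aside

variable {A : Type*} [NormedCommRing A]

lemma A_norm_pow (hnorm : ∀ x y : A, ‖x * y‖ = ‖x‖ * ‖y‖) (h1 : ‖(1 : A)‖ = 1)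
    (a : A) (n : ℕ) : ‖a ^ n‖ = ‖a‖ ^ n := by
  induction n with
  | zero => simpa using h1
  | succ n ih => rw [pow_succ, hnorm, ih, pow_succ]

lemma A_nonarch (hnorm : ∀ x y : A, ‖x * y‖ = ‖x‖ * ‖y‖) (h1 : ‖(1 : A)‖ = 1)
    (hnat : ∀ n : ℕ, ‖(n : A)‖ ≤ 1) (x y : A) : ‖x + y‖ ≤ max ‖x‖ ‖y‖ := by
  by_contra hcon
  push_neg at hcon
  set M := max ‖x‖ ‖y‖ with hM
  have hMnn : 0 ≤ M := le_trans (norm_nonneg x) (le_max_left _ _)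
  have hr : 0 < ‖x + y‖ := lt_of_le_of_lt hMnn hcon
  have key : ∀ n : ℕ, ‖x + y‖ ^ n ≤ ((n : ℝ) + 1) * M ^ n := by
    intro n
    rw [← A_norm_pow hnorm h1]
    rw [add_pow]
    refine le_trans (norm_sum_le _ _) ?_
    have hterm : ∀ k ∈ Finset.range (n + 1), ‖x ^ k * y ^ (n - k) * ((n.choose k : ℕ) : A)‖ ≤ M ^ n := by
      intro k hk
      have hkn : k ≤ n := Nat.lt_succ_iff.1 (Finset.mem_range.1 hk)
      rw [hnorm, hnorm, A_norm_pow hnorm h1, A_norm_pow hnorm h1]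
      have h2 : ‖x‖ ^ k * ‖y‖ ^ (n - k) ≤ M ^ k * M ^ (n - k) :=
        mul_le_mul (pow_le_pow_left₀ (norm_nonneg x) (le_max_left _ _) k)
          (pow_le_pow_left₀ (norm_nonneg y) (le_max_right _ _) _) (by positivity)
          (by positivity)
      calc ‖x‖ ^ k * ‖y‖ ^ (n - k) * ‖((n.choose k : ℕ) : A)‖
          ≤ (M ^ k * M ^ (n - k)) * 1 :=
            mul_le_mul h2 (hnat _) (norm_nonneg _) (by positivity)
        _ = M ^ n := by
            rw [mul_one, ← pow_add]
            congr 1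
            omega
    calc (∑ k ∈ Finset.range (n + 1), ‖x ^ k * y ^ (n - k) * ((n.choose k : ℕ) : A)‖)
        ≤ ∑ _k ∈ Finset.range (n + 1), M ^ n := Finset.sum_le_sum hterm
      _ = ((n : ℝ) + 1) * M ^ n := by
          rw [Finset.sum_const, Finset.card_range, nsmul_eq_mul]
          push_cast
          ring
  set q : ℝ := M / ‖x + y‖ with hq
  have hqnn : 0 ≤ q := by positivity
  have hqlt : q < 1 := by
    rw [hq, div_lt_one hr]
    exact hcon
  have h1le : ∀ n : ℕ, (1 : ℝ) ≤ ((n : ℝ) + 1) * q ^ n := by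
    intro n
    have hk := key n
    have hpow : (0 : ℝ) < ‖x + y‖ ^ n := pow_pos hr n
    have hdiv := (one_le_div hpow).2 hk
    calc (1 : ℝ) ≤ ((n : ℝ) + 1) * M ^ n / ‖x + y‖ ^ n := hdiv
      _ = ((n : ℝ) + 1) * q ^ n := by
          rw [hq, div_pow]; ring
  have htend : Tendsto (fun n : ℕ => ((n : ℝ) + 1) * q ^ n) atTop (𝓝 0) := by
    have t1 : Tendsto (fun n : ℕ => (n : ℝ) * q ^ n) atTop (𝓝 0) := by
      have hs : Summable (fun n : ℕ => (n : ℝ) ^ 1 * q ^ n) :=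
        summable_pow_mul_geometric_of_norm_lt_one 1 (by rwa [Real.norm_of_nonneg hqnn])
      have := hs.tendsto_atTop_zero
      simpa using this
    have t2 : Tendsto (fun n : ℕ => q ^ n) atTop (𝓝 0) :=
      tendsto_pow_atTop_nhds_zero_of_lt_one hqnn hqlt
    have := t1.add t2
    simp only [add_zero] at this
    refine this.congr fun n => ?_
    ring
  have hev : ∀ᶠ n : ℕ in atTop, ((n : ℝ) + 1) * q ^ n < 1 :=
    htend.eventually_lt_const (by norm_num)
  obtain ⟨n, hn⟩ := hev.exists
  linarith [h1le n]

end Aside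

section Aside2

variable {A : Type*} [NormedCommRing A]

lemma A_step (hnorm : ∀ x y : A, ‖x * y‖ = ‖x‖ * ‖y‖) (h1 : ‖(1 : A)‖ = 1)
    (hna : ∀ x y : A, ‖x + y‖ ≤ max ‖x‖ ‖y‖) (hnat : ∀ n : ℕ, ‖(n : A)‖ ≤ 1)
    (hpA : ‖(p : A)‖ ≤ (p : ℝ)⁻¹) {V : A} (hV : ‖V‖ ≤ 1) :
    ‖(1 + V) ^ p - 1‖ ≤ max ((p : ℝ)⁻¹ * ‖V‖) (‖V‖ ^ p) := by
  have hppos : (0 : ℝ) < p := by exact_mod_cast hp.out.pos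
  have hexp : (1 + V) ^ p - 1
      = ∑ i ∈ Finset.range p, V ^ (i + 1) * ((p.choose (i + 1) : ℕ) : A) := by
    have hb := add_pow V 1 p
    have h2 : (1 + V) ^ p = ∑ k ∈ Finset.range (p + 1), V ^ k * ((p.choose k : ℕ) : A) := by
      rw [add_comm 1 V, hb]
      refine Finset.sum_congr rfl fun k _ => ?_
      rw [one_pow, mul_one]
    rw [h2, Finset.sum_range_succ']
    simp
  rw [hexp]
  refine nonarch_sum_le hna _ _ (le_max_of_le_left (by positivity)) ?_
  intro i hi
  have hilt : i + 1 ≤ p := Finset.mem_range.1 hi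
  rcases eq_or_lt_of_le hilt with heq | hlt
  · rw [heq, Nat.choose_self]
    rw [Nat.cast_one, mul_one, A_norm_pow hnorm h1]
    exact le_max_of_le_right le_rfl
  · obtain ⟨w, hw⟩ := hp.out.dvd_choose_self (Nat.succ_ne_zero i) hlt
    refine le_max_of_le_left ?_
    rw [hnorm, A_norm_pow hnorm h1, hw]
    have hcast : (((p * w : ℕ) : A)) = (p : A) * ((w : ℕ) : A) := by push_cast; ring
    rw [hcast, hnorm]
    have hVp : ‖V‖ ^ (i + 1) ≤ ‖V‖ :=
      le_trans (pow_le_pow_of_le_one (norm_nonneg V) hV (by omega : 1 ≤ i + 1))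
        (by rw [pow_one])
    calc ‖V‖ ^ (i + 1) * (‖(p : A)‖ * ‖((w : ℕ) : A)‖)
        ≤ ‖V‖ * ((p : ℝ)⁻¹ * 1) := by
          refine mul_le_mul hVp ?_ (by positivity) (norm_nonneg V)
          exact mul_le_mul hpA (hnat w) (norm_nonneg _) (by positivity)
      _ = (p : ℝ)⁻¹ * ‖V‖ := by ring

lemma A_iter (hnorm : ∀ x y : A, ‖x * y‖ = ‖x‖ * ‖y‖) (h1 : ‖(1 : A)‖ = 1)
    (hna : ∀ x y : A, ‖x + y‖ ≤ max ‖x‖ ‖y‖) (hnat : ∀ n : ℕ, ‖(n : A)‖ ≤ 1)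
    (hpA : ‖(p : A)‖ ≤ (p : ℝ)⁻¹) {T : A} (hT1 : ‖T‖ < 1) (i : ℕ) :
    ∃ w ≤ i, ‖(1 + T) ^ p ^ i - 1‖ ≤ ((p : ℝ)⁻¹) ^ (i - w) * ‖T‖ ^ p ^ w := by
  have hppos : (0 : ℝ) < p := by exact_mod_cast hp.out.pos
  induction i with
  | zero =>
    refine ⟨0, le_rfl, ?_⟩
    simp [add_sub_cancel_left]
  | succ i ih =>
    obtain ⟨w, hwi, hbound⟩ := ih
    set V : A := (1 + T) ^ p ^ i - 1 with hVdef
    have hVle : ‖V‖ ≤ 1 := by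
      refine hbound.trans ?_
      have e1 : ((p : ℝ)⁻¹) ^ (i - w) ≤ 1 :=
        pow_le_one₀ (by positivity) (inv_le_one_of_one_le₀ (by exact_mod_cast hp.out.one_lt.le))
      have e2 : ‖T‖ ^ p ^ w ≤ 1 := pow_le_one₀ (norm_nonneg T) hT1.le
      calc ((p : ℝ)⁻¹) ^ (i - w) * ‖T‖ ^ p ^ w ≤ 1 * 1 :=
          mul_le_mul e1 e2 (by positivity) (by norm_num)
        _ = 1 := by norm_num
    have hstep := A_step hnorm h1 hna hnat hpA hVle
    have hrw : (1 + T) ^ p ^ (i + 1) - 1 = (1 + V) ^ p - 1 := by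
      have h1V : (1 : A) + V = (1 + T) ^ p ^ i := by rw [hVdef]; ring
      rw [h1V, ← pow_mul, ← pow_succ]
    rcases max_cases ((p : ℝ)⁻¹ * ‖V‖) (‖V‖ ^ p) with ⟨hmx, _⟩ | ⟨hmx, _⟩
    · refine ⟨w, by omega, ?_⟩
      rw [hrw]
      rw [hmx] at hstep
      calc ‖(1 + V) ^ p - 1‖ ≤ (p : ℝ)⁻¹ * ‖V‖ := hstep
        _ ≤ (p : ℝ)⁻¹ * (((p : ℝ)⁻¹) ^ (i - w) * ‖T‖ ^ p ^ w) :=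
            mul_le_mul_of_nonneg_left hbound (by positivity)
        _ = ((p : ℝ)⁻¹) ^ (i + 1 - w) * ‖T‖ ^ p ^ w := by
            rw [show i + 1 - w = (i - w) + 1 by omega, pow_succ]
            ring
    · refine ⟨w + 1, by omega, ?_⟩
      rw [hrw]
      rw [hmx] at hstep
      have hVpow : ‖V‖ ^ p ≤ (((p : ℝ)⁻¹) ^ (i - w) * ‖T‖ ^ p ^ w) ^ p :=
        pow_le_pow_left₀ (norm_nonneg V) hbound p
      have e : (((p : ℝ)⁻¹) ^ (i - w) * ‖T‖ ^ p ^ w) ^ p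
          = ((p : ℝ)⁻¹) ^ ((i - w) * p) * ‖T‖ ^ p ^ (w + 1) := by
        rw [mul_pow, ← pow_mul, ← pow_mul, pow_succ]
      have mono : ((p : ℝ)⁻¹) ^ ((i - w) * p) ≤ ((p : ℝ)⁻¹) ^ (i + 1 - (w + 1)) := by
        refine pow_le_pow_of_le_one (by positivity)
          (inv_le_one_of_one_le₀ (by exact_mod_cast hp.out.one_lt.le)) ?_
        have := Nat.le_mul_of_pos_right (i - w) hp.out.pos
        omega
      calc ‖(1 + V) ^ p - 1‖ ≤ ‖V‖ ^ p := hstep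
        _ ≤ ((p : ℝ)⁻¹) ^ ((i - w) * p) * ‖T‖ ^ p ^ (w + 1) := by rw [← e]; exact hVpow
        _ ≤ ((p : ℝ)⁻¹) ^ (i + 1 - (w + 1)) * ‖T‖ ^ p ^ (w + 1) :=
            mul_le_mul_of_nonneg_right mono (by positivity)

end Aside2

/-! ## binomial coefficients -/

lemma prod_descFactorial (n k : ℕ) :
    (∏ i ∈ Finset.range k, ((n : ℚ_[p]) - (i : ℚ_[p]))) = ((n.descFactorial k : ℕ) : ℚ_[p]) := by
  induction k with
  | zero => simp
  | succ k ih =>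
    rw [Finset.prod_range_succ, ih, Nat.descFactorial_succ]
    rcases le_or_gt k n with h | h
    · rw [Nat.cast_mul, Nat.cast_sub h]
      ring
    · have h0 : n.descFactorial k = 0 := Nat.descFactorial_eq_zero_iff_lt.2 h
      rw [h0]
      simp

lemma coeff_nat_choose (n k : ℕ) :
    ((k.factorial : ℚ_[p]))⁻¹ * (∏ i ∈ Finset.range k, ((n : ℚ_[p]) - (i : ℚ_[p])))
      = ((n.choose k : ℕ) : ℚ_[p]) := by
  rw [prod_descFactorial, Nat.descFactorial_eq_factorial_mul_choose]
  push_cast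
  rw [← mul_assoc, inv_mul_cancel₀ (Nat.cast_ne_zero.2 (Nat.factorial_ne_zero k)), one_mul]

section Abinom

variable {A : Type*} [NormedCommRing A] [NormedAlgebra ℚ_[p] A]

lemma hasSum_binom_nat (U : A) (n : ℕ) :
    HasSum (fun k => (((k.factorial : ℚ_[p]))⁻¹
      * ∏ i ∈ Finset.range k, (((n : ℕ) : ℚ_[p]) - (i : ℚ_[p]))) • U ^ k) ((1 + U) ^ n) := by
  have hzero : ∀ k ∉ Finset.range (n + 1), (((k.factorial : ℚ_[p]))⁻¹
      * ∏ i ∈ Finset.range k, (((n : ℕ) : ℚ_[p]) - (i : ℚ_[p]))) • U ^ k = 0 := by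
    intro k hk
    have hnk : n < k := by simpa [Nat.lt_succ_iff, not_le] using hk
    rw [coeff_nat_choose, Nat.choose_eq_zero_of_lt hnk]
    simp
  have hsum : HasSum _ _ := hasSum_sum_of_ne_finset_zero hzero
  have e : (∑ k ∈ Finset.range (n + 1), (((k.factorial : ℚ_[p]))⁻¹
      * ∏ i ∈ Finset.range k, (((n : ℕ) : ℚ_[p]) - (i : ℚ_[p]))) • U ^ k) = (1 + U) ^ n := by
    rw [add_comm (1 : A) U, add_pow]
    refine Finset.sum_congr rfl fun k _ => ?_
    rw [coeff_nat_choose, one_pow, mul_one, Nat.cast_smul_eq_nsmul, nsmul_eq_mul]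
    ring
  rw [e] at hsum
  exact hsum

end Abinom

/-! ## tendsto lemmas -/

lemma tendsto_padicInt {f : ℕ → ℤ_[p]} {b : ℤ_[p]}
    (h : Tendsto (fun j => ((f j : ℤ_[p]) : ℚ_[p])) atTop (𝓝 ((b : ℤ_[p]) : ℚ_[p]))) :
    Tendsto f atTop (𝓝 b) := by
  rw [tendsto_iff_dist_tendsto_zero] at h ⊢
  have e : ∀ j, dist (f j) b = dist ((f j : ℤ_[p]) : ℚ_[p]) ((b : ℤ_[p]) : ℚ_[p]) := by
    intro j
    rw [dist_eq_norm, dist_eq_norm, PadicInt.norm_def, PadicInt.coe_sub]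
  simpa only [e] using h

lemma tendsto_units {M : Type*} [Monoid M] [TopologicalSpace M] {f : ℕ → Mˣ} {u : Mˣ}
    (h1 : Tendsto (fun j => ((f j : Mˣ) : M)) atTop (𝓝 ((u : Mˣ) : M)))
    (h2 : Tendsto (fun j => (((f j)⁻¹ : Mˣ) : M)) atTop (𝓝 ((u⁻¹ : Mˣ) : M))) :
    Tendsto f atTop (𝓝 u) := by
  rw [Units.isInducing_embedProduct.tendsto_nhds_iff]
  exact Tendsto.prodMk_nhds h1 ((MulOpposite.continuous_op.tendsto _).comp h2)

lemma unit_inv_val (w : ℤ_[p]ˣ) :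
    (((w⁻¹ : ℤ_[p]ˣ) : ℤ_[p]) : ℚ_[p]) = ((((w : ℤ_[p]ˣ) : ℤ_[p]) : ℚ_[p]))⁻¹ := by
  have hmul : ((w : ℤ_[p]ˣ) : ℤ_[p]) * ((w⁻¹ : ℤ_[p]ˣ) : ℤ_[p]) = 1 := by
    exact_mod_cast w.mul_inv
  have h2 : ((((w : ℤ_[p]ˣ) : ℤ_[p]) : ℚ_[p]) * (((w⁻¹ : ℤ_[p]ˣ) : ℤ_[p]) : ℚ_[p])) = 1 := by
    exact_mod_cast congrArg (fun t : ℤ_[p] => (t : ℚ_[p])) hmul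
  exact (inv_eq_of_mul_eq_one_right h2).symm

end Stmt8

open scoped BigOperators

open Filter Topology Stmt8

/-- a continuous character `s : ℤ_pˣ → Aˣ` with `T = s(exp p) - 1` satisfying
`‖T^{p^{c-1}}‖ < 1/p` is, on `1 + p^c ℤ_p`, given by the convergent power series
`s(z) = Σ_k binom(log z / p^c, k) · ((1+T)^{p^{c-1}} - 1)^k`, where `log` is the `p`-adic
logarithm and `binom(x,k) = x(x-1)⋯(x-k+1)/k!`. -/
theorem stmt_8 (p : ℕ) [Fact p.Prime] (hodd : Odd p)
    (A : Type*) [NormedCommRing A] [NormedAlgebra ℚ_[p] A] [CompleteSpace A]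
    (hnorm : ∀ x y : A, ‖x * y‖ = ‖x‖ * ‖y‖)
    (s : ℤ_[p]ˣ →* Aˣ)
    (hcont : Continuous fun u : ℤ_[p]ˣ => ((s u : Aˣ) : A))
    (ε : ℤ_[p]ˣ) (hε : ((ε : ℤ_[p]) : ℚ_[p]) = NormedSpace.exp (p : ℚ_[p]))
    (T : A) (hT : T = ((s ε : Aˣ) : A) - 1)
    (c : ℕ) (hc : 0 < c)
    (hTc : ‖T ^ (p ^ (c - 1))‖ < ((p : ℝ))⁻¹)
    (z : ℤ_[p]ˣ) (hz : (p : ℤ_[p]) ^ c ∣ ((z : ℤ_[p]) - 1)) :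
    HasSum
      (fun k : ℕ =>
        ((Nat.factorial k : ℚ_[p])⁻¹ *
            ∏ i ∈ Finset.range k,
              ((∑' m : ℕ, (-1 : ℚ_[p]) ^ m / ((m : ℚ_[p]) + 1) *
                  (((z : ℤ_[p]) : ℚ_[p]) - 1) ^ (m + 1)) / (p : ℚ_[p]) ^ c - (i : ℚ_[p]))) •
          (((1 + T) ^ (p ^ (c - 1)) - 1) ^ k))
      ((s z : Aˣ) : A) := by
  classical
  have hp := (inferInstance : Fact p.Prime)
  rcases subsingleton_or_nontrivial A with hsub | hnt
  · have hall : ∀ (g : ℕ → A) (a : A), HasSum g a := by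
      intro g a
      have hgoal : (fun s' : Finset ℕ => ∑ k ∈ s', g k) = fun _ => a :=
        funext fun _ => Subsingleton.elim _ _
      rw [HasSum, hgoal]
      exact tendsto_const_nhds
    exact hall _ _
  have hp3 : 3 ≤ p := by
    obtain ⟨k, hk⟩ := hodd
    have := hp.out.two_le
    omega
  have hppos : (0 : ℝ) < p := by exact_mod_cast hp.out.pos
  have hpinv1 : (p : ℝ)⁻¹ < 1 := by
    rw [inv_lt_one_iff₀]
    right
    exact_mod_cast lt_of_lt_of_le (by norm_num) hp3
  -- A basics
  have h1A : ‖(1 : A)‖ = 1 := by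
    have h := hnorm 1 1
    rw [mul_one] at h
    have h0 : ‖(1 : A)‖ ≠ 0 := by
      simp only [ne_eq, norm_eq_zero]
      exact one_ne_zero
    have h' : ‖(1 : A)‖ * 1 = ‖(1 : A)‖ * ‖(1 : A)‖ := by rw [mul_one]; exact h
    exact (mul_left_cancel₀ h0 h').symm
  have hsmul_nat : ∀ n : ℕ, ((n : ℚ_[p]) • (1 : A)) = (n : A) := fun n => by
    rw [← Algebra.algebraMap_eq_smul_one, map_natCast]
  have hnatA : ∀ n : ℕ, ‖(n : A)‖ ≤ 1 := fun n => by
    rw [← hsmul_nat n, norm_smul, h1A, mul_one]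
    exact norm_natCast_le_one n
  have hnaA := A_nonarch hnorm h1A hnatA
  have hpA : ‖(p : A)‖ ≤ (p : ℝ)⁻¹ := by
    rw [← hsmul_nat p, norm_smul, h1A, mul_one, Padic.norm_p]
  -- U
  set U : A := (1 + T) ^ p ^ (c - 1) - 1 with hUdef
  have hT1 : ‖T‖ < 1 := by
    by_contra hcon
    push_neg at hcon
    have h2 := pow_le_pow_left₀ (by norm_num : (0:ℝ) ≤ 1) hcon (p ^ (c - 1))
    rw [one_pow] at h2
    rw [← A_norm_pow hnorm h1A] at h2
    linarith [hTc, hpinv1]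
  have hUlt : ‖U‖ < (p : ℝ)⁻¹ := by
    obtain ⟨w, hw, hbound⟩ := A_iter hnorm h1A hnaA hnatA hpA hT1 (c - 1)
    rcases eq_or_lt_of_le hw with heq | hlt
    · subst heq
      rw [Nat.sub_self] at hbound
      simp only [pow_zero, one_mul] at hbound
      calc ‖U‖ ≤ ‖T‖ ^ p ^ (c - 1) := hbound
        _ = ‖T ^ p ^ (c - 1)‖ := (A_norm_pow hnorm h1A T _).symm
        _ < (p : ℝ)⁻¹ := hTc
    · have h1le : 1 ≤ c - 1 - w := by omega
      have hpw : p ^ w ≠ 0 := pow_ne_zero w hp.out.ne_zero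
      have hTw : ‖T‖ ^ p ^ w < 1 := pow_lt_one₀ (norm_nonneg T) hT1 hpw
      calc ‖U‖ ≤ ((p : ℝ)⁻¹) ^ (c - 1 - w) * ‖T‖ ^ p ^ w := hbound
        _ ≤ (p : ℝ)⁻¹ * ‖T‖ ^ p ^ w := by
            refine mul_le_mul_of_nonneg_right ?_ (by positivity)
            calc ((p : ℝ)⁻¹) ^ (c - 1 - w) ≤ ((p : ℝ)⁻¹) ^ 1 :=
                pow_le_pow_of_le_one (by positivity) hpinv1.le h1le
              _ = (p : ℝ)⁻¹ := pow_one _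
        _ < (p : ℝ)⁻¹ * 1 := mul_lt_mul_of_pos_left hTw (by positivity)
        _ = (p : ℝ)⁻¹ := mul_one _
  -- z side
  set zq : ℚ_[p] := ((z : ℤ_[p]) : ℚ_[p]) with hzqdef
  obtain ⟨wz, hwz⟩ := hz
  have hzq1c : ‖zq - 1‖ ≤ ((p : ℝ)⁻¹) ^ c := by
    have e := congrArg (fun t : ℤ_[p] => ((t : ℤ_[p]) : ℚ_[p])) hwz
    simp only [PadicInt.coe_sub, PadicInt.coe_mul, PadicInt.coe_pow, PadicInt.coe_natCast,
      PadicInt.coe_one] at e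
    rw [hzqdef, e, norm_mul, norm_pow, Padic.norm_p]
    have hwle : ‖((wz : ℤ_[p]) : ℚ_[p])‖ ≤ 1 := by
      rw [← PadicInt.norm_def]
      exact PadicInt.norm_le_one wz
    calc ((p : ℝ)⁻¹) ^ c * ‖((wz : ℤ_[p]) : ℚ_[p])‖ ≤ ((p : ℝ)⁻¹) ^ c * 1 :=
        mul_le_mul_of_nonneg_left hwle (by positivity)
      _ = ((p : ℝ)⁻¹) ^ c := mul_one _
  have hc1 : ((p : ℝ)⁻¹) ^ c ≤ (p : ℝ)⁻¹ := by
    calc ((p : ℝ)⁻¹) ^ c ≤ ((p : ℝ)⁻¹) ^ 1 :=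
        pow_le_pow_of_le_one (by positivity) hpinv1.le hc
      _ = (p : ℝ)⁻¹ := pow_one _
  have hzq1 : ‖zq - 1‖ ≤ (p : ℝ)⁻¹ := hzq1c.trans hc1
  have hL : (∑' m : ℕ, (-1 : ℚ_[p]) ^ m / ((m : ℚ_[p]) + 1) * (zq - 1) ^ (m + 1))
      = ellFn p (zq - 1) := by
    rw [show ellFn p (zq - 1) = ∑' n, (aQ n : ℚ_[p]) * (zq - 1) ^ n from rfl]
    rw [Summable.tsum_eq_zero_add (Summable.of_norm (summable_ell_norm hp3 hzq1))]
    have h0 : (aQ 0 : ℚ_[p]) * (zq - 1) ^ 0 = 0 := by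
      show ((0 : ℚ) : ℚ_[p]) * _ = 0
      simp
    rw [h0, zero_add]
    refine tsum_congr fun m => ?_
    have e : (aQ (m + 1) : ℚ_[p]) = (-1 : ℚ_[p]) ^ m / ((m : ℚ_[p]) + 1) := by
      show (((-1) ^ m / ((m : ℚ) + 1) : ℚ) : ℚ_[p]) = _
      push_cast
      ring
    rw [e]
  rw [hL]
  set pc : ℚ_[p] := (p : ℚ_[p]) ^ c with hpcdef
  have hpc0 : pc ≠ 0 := by
    apply pow_ne_zero
    exact_mod_cast hp.out.ne_zero
  have hpcnorm : ‖pc‖ = ((p : ℝ)⁻¹) ^ c := by rw [hpcdef, norm_pow, Padic.norm_p]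
  set lv : ℚ_[p] := ellFn p (zq - 1) with hlvdef
  have hlvnorm : ‖lv‖ ≤ ((p : ℝ)⁻¹) ^ c := (norm_ellFn_le hp3 hzq1).trans hzq1c
  set x : ℚ_[p] := lv / pc with hxdef
  have hxnorm : ‖x‖ ≤ 1 := by
    rw [hxdef, norm_div, hpcnorm, div_le_one (by positivity)]
    simpa using hlvnorm
  have hxpc : x * pc = lv := div_mul_cancel₀ lv hpc0
  set xint : ℤ_[p] := ⟨x, hxnorm⟩ with hxintdef
  have hseq : ∀ j : ℕ, ∃ n : ℕ, dist xint ((n : ℕ) : ℤ_[p]) < 1 / (j + 1) :=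
    fun j => PadicInt.denseRange_natCast.exists_dist_lt xint (by positivity)
  choose u hu using hseq
  have hulim : Tendsto (fun j => ((u j : ℕ) : ℚ_[p])) atTop (𝓝 x) := by
    rw [tendsto_iff_dist_tendsto_zero]
    refine squeeze_zero (fun j => dist_nonneg) (fun j => ?_)
      tendsto_one_div_add_atTop_nhds_zero_nat
    have e : dist ((u j : ℕ) : ℚ_[p]) x = dist xint ((u j : ℕ) : ℤ_[p]) := by
      rw [dist_eq_norm, dist_eq_norm, PadicInt.norm_def, PadicInt.coe_sub]
      have hxc : ((xint : ℤ_[p]) : ℚ_[p]) = x := rfl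
      rw [hxc, PadicInt.coe_natCast, norm_sub_rev]
    rw [e]
    exact (hu j).le
  -- exponential values
  have hnormp : ‖(p : ℚ_[p])‖ ≤ (p : ℝ)⁻¹ := le_of_eq Padic.norm_p
  have hεq : ((ε : ℤ_[p]) : ℚ_[p]) = Efn p (p : ℚ_[p]) := by
    rw [hε, exp_eq_Efn]
  have hpcarg : ∀ y : ℚ_[p], ‖y‖ ≤ 1 → ‖y * pc‖ ≤ (p : ℝ)⁻¹ := by
    intro y hy
    rw [norm_mul, hpcnorm]
    calc ‖y‖ * ((p : ℝ)⁻¹) ^ c ≤ 1 * (p : ℝ)⁻¹ :=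
        mul_le_mul hy hc1 (by positivity) (by norm_num)
      _ = (p : ℝ)⁻¹ := one_mul _
  have hpceq : ((p : ℚ_[p])) ^ (c - 1) * (p : ℚ_[p]) = pc := by
    rw [hpcdef, ← pow_succ]
    congr 1
    omega
  set η : ℤ_[p]ˣ := ε ^ p ^ (c - 1) with hηdef
  have hval : ∀ n : ℕ, (((η ^ n : ℤ_[p]ˣ) : ℤ_[p]) : ℚ_[p]) = Efn p ((n : ℚ_[p]) * pc) := by
    intro n
    have h1 : ((η ^ n : ℤ_[p]ˣ) : ℤ_[p]) = (ε : ℤ_[p]) ^ (p ^ (c - 1) * n) := by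
      rw [hηdef, ← pow_mul, Units.val_pow_eq_pow_val]
    rw [h1, PadicInt.coe_pow, hεq, ← Efn_natmul hp3 hnormp (p ^ (c - 1) * n)]
    congr 1
    push_cast
    rw [← hpceq]
    ring
  have hglim : Tendsto (fun j => ((u j : ℚ_[p])) * pc) atTop (𝓝 (x * pc)) :=
    hulim.mul_const pc
  have hgbound : ∀ j, ‖((u j : ℚ_[p])) * pc‖ ≤ (p : ℝ)⁻¹ :=
    fun j => hpcarg _ (norm_natCast_le_one (u j))
  have hxbound : ‖x * pc‖ ≤ (p : ℝ)⁻¹ := hpcarg x hxnorm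
  have hvals : Tendsto (fun j => Efn p ((u j : ℚ_[p]) * pc)) atTop (𝓝 (Efn p (x * pc))) :=
    tendsto_Efn hp3 hgbound hxbound hglim
  have hEx : Efn p (x * pc) = zq := by
    rw [hxpc, hlvdef, Efn_ellFn hp3 hzq1]
    ring
  have hvalinv : ∀ n : ℕ, ((((η ^ n)⁻¹ : ℤ_[p]ˣ) : ℤ_[p]) : ℚ_[p])
      = Efn p (-((n : ℚ_[p]) * pc)) := by
    intro n
    rw [unit_inv_val, hval n]
    exact inv_eq_of_mul_eq_one_right
      (Efn_mul_Efn_neg hp3 (hpcarg _ (norm_natCast_le_one n)))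
  have hzinv : (((z⁻¹ : ℤ_[p]ˣ) : ℤ_[p]) : ℚ_[p]) = Efn p (-(x * pc)) := by
    rw [unit_inv_val]
    have hmm : zq * Efn p (-(x * pc)) = 1 := by
      rw [← hEx]
      exact Efn_mul_Efn_neg hp3 hxbound
    rw [show (((z : ℤ_[p]ˣ) : ℤ_[p]) : ℚ_[p]) = zq from rfl]
    exact inv_eq_of_mul_eq_one_right hmm
  have hunit : Tendsto (fun j => η ^ (u j)) atTop (𝓝 z) := by
    refine tendsto_units ?_ ?_
    · apply tendsto_padicInt
      refine Tendsto.congr (fun j => (hval (u j)).symm) ?_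
      rw [show (((z : ℤ_[p]ˣ) : ℤ_[p]) : ℚ_[p]) = Efn p (x * pc) from hEx.symm]
      exact hvals
    · apply tendsto_padicInt
      refine Tendsto.congr (fun j => (hvalinv (u j)).symm) ?_
      rw [show (((z⁻¹ : ℤ_[p]ˣ) : ℤ_[p]) : ℚ_[p]) = Efn p (-(x * pc)) from hzinv]
      refine tendsto_Efn hp3 (fun j => by simpa using hgbound j) (by simpa using hxbound)
        hglim.neg
  have hsval : ∀ j, ((s (η ^ (u j)) : Aˣ) : A) = (1 + U) ^ (u j) := by
    intro j
    have e1 : ((s (η ^ (u j)) : Aˣ) : A) = (((s ε : Aˣ) : A)) ^ (p ^ (c - 1) * (u j)) := by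
      rw [hηdef, ← pow_mul, map_pow, Units.val_pow_eq_pow_val]
    rw [e1]
    have e2 : ((s ε : Aˣ) : A) = 1 + T := by rw [hT]; ring
    rw [e2, pow_mul]
    congr 1
    rw [hUdef]
    ring
  have hslim : Tendsto (fun j => (1 + U) ^ (u j)) atTop (𝓝 ((s z : Aˣ) : A)) := by
    refine Tendsto.congr (fun j => hsval j) ?_
    exact (hcont.tendsto z).comp hunit
  -- A-side series
  set co : ℚ_[p] → ℕ → ℚ_[p] :=
    fun y k => ((k.factorial : ℚ_[p]))⁻¹ * ∏ i ∈ Finset.range k, (y - (i : ℚ_[p])) with hco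
  have hconorm : ∀ (y : ℚ_[p]), ‖y‖ ≤ 1 → ∀ k, ‖co y k‖ ≤ sp p ^ k := by
    intro y hy k
    rw [hco]
    simp only
    rw [norm_mul]
    calc ‖((k.factorial : ℚ_[p]))⁻¹‖ * ‖∏ i ∈ Finset.range k, (y - (i : ℚ_[p]))‖
        ≤ sp p ^ k * 1 := by
          refine mul_le_mul (norm_inv_factorial_le hp3 k) ?_ (norm_nonneg _)
            (pow_nonneg sp_nonneg k)
          rw [norm_prod]
          refine Finset.prod_le_one (fun i _ => norm_nonneg _) (fun i _ => ?_)
          exact (padic_sub_le_max y (i : ℚ_[p])).trans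
            (max_le hy (norm_natCast_le_one i))
      _ = sp p ^ k := mul_one _
  have hUnorm : ∀ k : ℕ, ‖U ^ k‖ = ‖U‖ ^ k := fun k => A_norm_pow hnorm h1A U k
  set bound : ℕ → ℝ := fun k => sp p ^ k * ‖U‖ ^ k with hbounddef
  have hboundsum : Summable bound := by
    have hgeo : sp p * ‖U‖ < 1 := by
      calc sp p * ‖U‖ ≤ sp p * (p : ℝ)⁻¹ :=
          mul_le_mul_of_nonneg_left hUlt.le sp_nonneg
        _ = (sp p)⁻¹ := sp_mul_inv_p hp3
        _ < 1 := inv_sp_lt_one hp3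
    have hgs : Summable (fun k : ℕ => (sp p * ‖U‖) ^ k) :=
      summable_geometric_of_lt_one (mul_nonneg sp_nonneg (norm_nonneg U)) hgeo
    refine hgs.congr fun k => ?_
    rw [hbounddef]
    simp only
    rw [mul_pow]
  have hfbound : ∀ (y : ℚ_[p]), ‖y‖ ≤ 1 → ∀ k, ‖co y k • U ^ k‖ ≤ bound k := by
    intro y hy k
    rw [norm_smul, hbounddef]
    simp only
    rw [hUnorm k]
    exact mul_le_mul_of_nonneg_right (hconorm y hy k) (pow_nonneg (norm_nonneg U) k)
  have hptw : ∀ k, Tendsto (fun j => co ((u j : ℚ_[p])) k • U ^ k) atTop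
      (𝓝 (co x k • U ^ k)) := by
    intro k
    have hcy : Continuous fun y : ℚ_[p] => co y k := by
      rw [hco]
      exact continuous_const.mul
        (continuous_finset_prod (f := fun (i : ℕ) (y : ℚ_[p]) => y - (i : ℚ_[p])) _ fun i _ => continuous_id.sub continuous_const)
    exact ((hcy.tendsto x).comp hulim).smul_const _
  have hDC := tendsto_tsum_of_dominated_convergence (𝓕 := atTop)
    (f := fun j k => co ((u j : ℚ_[p])) k • U ^ k)
    (g := fun k => co x k • U ^ k) (bound := bound) hboundsum hptw
    (Eventually.of_forall fun j => fun k => hfbound _ (norm_natCast_le_one (u j)) k)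
  have hsum_j : ∀ j, HasSum (fun k => co ((u j : ℚ_[p])) k • U ^ k) ((1 + U) ^ (u j)) :=
    fun j => hasSum_binom_nat U (u j)
  have hDC' : Tendsto (fun j => (1 + U) ^ (u j)) atTop (𝓝 (∑' k, co x k • U ^ k)) :=
    Tendsto.congr (fun j => (hsum_j j).tsum_eq) hDC
  have hfinal : (∑' k, co x k • U ^ k) = ((s z : Aˣ) : A) := tendsto_nhds_unique hDC' hslim
  have hsummable : Summable (fun k => co x k • U ^ k) :=
    Summable.of_norm (Summable.of_nonneg_of_le (fun _ => norm_nonneg _)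
      (fun k => hfbound x hxnorm k) hboundsum)
  have hHS : HasSum (fun k => co x k • U ^ k) ((s z : Aˣ) : A) := by
    rw [← hfinal]
    exact hsummable.hasSum
  exact hHS
end

section
/- Let Q_1(X), Q_2(X) ∈ O_{ℂ_p}⟦X⟧ be power series with Q_1(0) = Q_2(0) = 1, and let N_1, N_2 : ℝ_{≥0} → ℝ be the functions whose graphs are their Newton polygons. Let ν be a strictly increasing continuous function on ℝ_{≥0} with ν(0) ≤ 0, lim_{x→∞} ν(x) = ∞, ν having an inverse ν^{-1} defined on ℝ_{≥0} with x·ν^{-1}(x) increasing on ℝ_{>0}, and N_i(x) ≥ x·ν(x) for i = 1,2 and all x ≥ 1. Set m_ν(x) = ⌊x·ν^{-1}(x)⌋. If Q_1(X) ≡ Q_2(X) mod p^{m_ν(α)+1} for some α ≥ 0, then the Newton polygons N_1 and N_2 coincide on all sides of slope at most α. -/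
open Set Filter

private lemma affine_convexOn (c β x : ℝ) :
    ConvexOn ℝ (Set.Ici (0:ℝ)) (fun t => c + β * (t - x)) := by
  refine ⟨convex_Ici 0, ?_⟩
  intro y _ z _ a b ha hb hab
  simp only [smul_eq_mul]
  have h : c + β * ((a * y + b * z) - x) =
      a * (c + β * (y - x)) + b * (c + β * (z - x)) := by
    have hb' : b = 1 - a := by linarith
    subst hb'; ring
  exact le_of_eq h

private lemma support_line (α x : ℝ) (hα : 0 ≤ α) (hx : 0 ≤ x)
    (NPi : ℝ → ℝ) (hconv : ConvexOn ℝ (Set.Ici (0:ℝ)) NPi)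
    (h0 : NPi 0 = 0) (hpos : ∀ t : ℝ, 0 ≤ t → 0 ≤ NPi t)
    (Hε : ∀ ε : ℝ, 0 < ε → ∃ y, x < y ∧ NPi y - NPi x ≤ (α + ε) * (y - x)) :
    ∃ β : ℝ, 0 ≤ β ∧ β ≤ α ∧
      (∀ t : ℝ, 0 ≤ t → NPi x + β * (t - x) ≤ NPi t) ∧
      (∀ t : ℝ, 0 ≤ t → NPi x + β * (t - x) ≤ α * t) ∧
      (∀ ε : ℝ, 0 < ε → ∃ t, x < t ∧ NPi t < NPi x + (β + ε) * (t - x)) := by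
  set S : Set ℝ := (fun t => (NPi t - NPi x) / (t - x)) '' Set.Ioi x with hS
  have hne : S.Nonempty := ⟨_, Set.mem_image_of_mem _ (by simp : x + 1 ∈ Set.Ioi x)⟩
  have hmono : ∀ t : ℝ, x < t → NPi x ≤ NPi t := by
    intro t ht
    have ht0 : 0 < t := lt_of_le_of_lt hx ht
    have hb : 0 ≤ x / t := div_nonneg hx ht0.le
    have hxt1 : x / t ≤ 1 := (div_le_one ht0).2 ht.le
    have ha : 0 ≤ 1 - x / t := by linarith
    have hcomb := hconv.2 (Set.mem_Ici.2 le_rfl) (Set.mem_Ici.2 ht0.le) ha hb (by ring)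
    simp only [smul_eq_mul] at hcomb
    have harg : (1 - x / t) * 0 + (x / t) * t = x := by field_simp; ring
    rw [harg, h0] at hcomb
    have hp := hpos t ht0.le
    nlinarith [mul_nonneg ha hp]
  have hlb : ∀ r ∈ S, (0:ℝ) ≤ r := by
    rintro r ⟨t, ht, rfl⟩
    have ht' : x < t := ht
    exact div_nonneg (by linarith [hmono t ht']) (by linarith)
  have hbdd : BddBelow S := ⟨0, fun r hr => hlb r hr⟩
  have hβ0 : 0 ≤ sInf S := le_csInf hne hlb
  have hβα : sInf S ≤ α := by
    by_contra hcon
    push_neg at hcon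
    obtain ⟨y, hxy, hsl⟩ := Hε ((sInf S - α) / 2) (by linarith)
    have h1 : sInf S ≤ (NPi y - NPi x) / (y - x) := csInf_le hbdd ⟨y, hxy, rfl⟩
    rw [le_div_iff₀ (by linarith)] at h1
    nlinarith
  have hsupp : ∀ t : ℝ, 0 ≤ t → NPi x + sInf S * (t - x) ≤ NPi t := by
    intro t ht
    rcases lt_trichotomy t x with htx | htx | htx
    · have hsl : (NPi x - NPi t) / (x - t) ≤ sInf S := by
        refine le_csInf hne ?_
        rintro r ⟨u, hu, rfl⟩
        exact hconv.slope_mono_adjacent (Set.mem_Ici.2 ht)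
          (Set.mem_Ici.2 (by linarith [show x < u from hu] : (0:ℝ) ≤ u)) htx hu
      rw [div_le_iff₀ (by linarith)] at hsl
      nlinarith
    · subst htx; simp
    · have h1 : sInf S ≤ (NPi t - NPi x) / (t - x) := csInf_le hbdd ⟨t, htx, rfl⟩
      rw [le_div_iff₀ (by linarith)] at h1
      linarith
  have hx0 : NPi x ≤ sInf S * x := by
    have := hsupp 0 le_rfl
    rw [h0] at this
    linarith
  refine ⟨sInf S, hβ0, hβα, hsupp, ?_, ?_⟩
  · intro t ht
    nlinarith [mul_le_mul_of_nonneg_right hβα ht]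
  · intro ε hε
    have hlt : sInf S < sInf S + ε := by linarith
    obtain ⟨r, hrS, hrlt⟩ := exists_lt_of_csInf_lt hne hlt
    obtain ⟨t, htI, rfl⟩ := hrS
    have htx : x < t := htI
    refine ⟨t, htx, ?_⟩
    rw [div_lt_iff₀ (by linarith)] at hrlt
    linarith

private lemma wan_A (ν : ℝ → ℝ) (M W α x : ℝ)
    (hνmono : StrictMonoOn ν (Set.Ici (0:ℝ)))
    (hW0 : 0 ≤ W) (hνW : ν W = α)
    (hα : 0 ≤ α) (hx : 0 ≤ x) (hM1 : 1 ≤ M) (hMgt : α * W < M)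
    (NPi NPj : ℝ → ℝ) (vQi vQj : ℕ → EReal)
    (hconvi : ConvexOn ℝ (Set.Ici (0:ℝ)) NPi) (hi0 : NPi 0 = 0)
    (hipos : ∀ t : ℝ, 0 ≤ t → 0 ≤ NPi t)
    (hlei : ∀ N : ℕ, ((NPi N : ℝ) : EReal) ≤ vQi N)
    (hmaxj : ∀ g : ℝ → ℝ, ConvexOn ℝ (Set.Ici (0:ℝ)) g →
      (∀ N : ℕ, ((g N : ℝ) : EReal) ≤ vQj N) → ∀ t ∈ Set.Ici (0:ℝ), g t ≤ NPj t)
    (hnuj : ∀ N : ℕ, 1 ≤ (N:ℝ) → (((N : ℝ) * ν N : ℝ) : EReal) ≤ vQj N)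
    (htrans : ∀ N : ℕ, min (vQi N) ((M : ℝ) : EReal) ≤ vQj N)
    (Hε : ∀ ε : ℝ, 0 < ε → ∃ y, x < y ∧ NPi y - NPi x ≤ (α + ε) * (y - x)) :
    NPi x ≤ NPj x := by
  obtain ⟨β, hβ0, hβα, hsupp, hline, -⟩ := support_line α x hα hx NPi hconvi hi0 hipos Hε
  have hgN : ∀ N : ℕ, (((NPi x + β * ((N:ℝ) - x) : ℝ)) : EReal) ≤ vQj N := by
    intro N
    by_cases hc : NPi x + β * ((N:ℝ) - x) ≤ M
    · refine le_trans (le_min ?_ ?_) (htrans N)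
      · exact le_trans (EReal.coe_le_coe_iff.2 (hsupp N (Nat.cast_nonneg N))) (hlei N)
      · exact EReal.coe_le_coe_iff.2 hc
    · push_neg at hc
      have hαN : M < α * N := lt_of_lt_of_le hc (hline N (Nat.cast_nonneg N))
      have hα0 : (0:ℝ) < α := by
        by_contra h
        push_neg at h
        nlinarith [Nat.cast_nonneg (α := ℝ) N]
      have hN0 : (0:ℝ) < N := by nlinarith [Nat.cast_nonneg (α := ℝ) N]
      have hWN : W < (N:ℝ) := by nlinarith
      have hνN : α < ν N := by
        rw [← hνW]
        exact hνmono (Set.mem_Ici.2 hW0) (Set.mem_Ici.2 (Nat.cast_nonneg N)) hWN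
      have hfin : NPi x + β * ((N:ℝ) - x) ≤ (N:ℝ) * ν (N:ℝ) := by
        have h1 := hline N (Nat.cast_nonneg N)
        nlinarith
      refine le_trans (EReal.coe_le_coe_iff.2 hfin) (hnuj N ?_)
      exact_mod_cast hN0
  have h := hmaxj (fun t => NPi x + β * (t - x)) (affine_convexOn _ _ _) hgN x (Set.mem_Ici.2 hx)
  simpa using h

private lemma wan_B (ν w : ℝ → ℝ) (M α x : ℝ)
    (hνmono : StrictMonoOn ν (Set.Ici (0:ℝ)))
    (hw : ∀ t : ℝ, 0 ≤ t → 0 ≤ w t ∧ ν (w t) = t)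
    (hw' : ∀ t : ℝ, 0 ≤ t → w (ν t) = t)
    (hα : 0 ≤ α) (hx : 0 ≤ x) (hM1 : 1 ≤ M) (hMgt : α * w α < M)
    (NPi NPj : ℝ → ℝ) (vQi vQj : ℕ → EReal)
    (hconvi : ConvexOn ℝ (Set.Ici (0:ℝ)) NPi) (hi0 : NPi 0 = 0)
    (hipos : ∀ t : ℝ, 0 ≤ t → 0 ≤ NPi t)
    (hlei : ∀ N : ℕ, ((NPi N : ℝ) : EReal) ≤ vQi N)
    (hlej : ∀ N : ℕ, ((NPj N : ℝ) : EReal) ≤ vQj N)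
    (hmaxi : ∀ g : ℝ → ℝ, ConvexOn ℝ (Set.Ici (0:ℝ)) g →
      (∀ N : ℕ, ((g N : ℝ) : EReal) ≤ vQi N) → ∀ t ∈ Set.Ici (0:ℝ), g t ≤ NPi t)
    (hnui : ∀ N : ℕ, 1 ≤ (N:ℝ) → (N:ℝ) * ν N ≤ NPi N)
    (htransji : ∀ N : ℕ, min (vQj N) ((M : ℝ) : EReal) ≤ vQi N)
    (hij : NPi x ≤ NPj x)
    (Hε : ∀ ε : ℝ, 0 < ε → ∃ y, x < y ∧ NPi y - NPi x ≤ (α + ε) * (y - x)) :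
    ∀ ε : ℝ, 0 < ε → ∃ z, x < z ∧ NPj z - NPj x ≤ (α + ε) * (z - x) := by
  intro ε hε
  obtain ⟨β, hβ0, hβα, hsupp, hline, htang⟩ := support_line α x hα hx NPi hconvi hi0 hipos Hε
  set W := w α with hWdef
  have hW0 : 0 ≤ W := (hw α hα).1
  have hνW : ν W = α := (hw α hα).2
  set γ := M - α * W with hγdef
  have hγ0 : 0 < γ := by rw [hγdef]; linarith
  set δ := min 1 (γ / (2 * (α + 1))) with hδdef
  have hδ0 : 0 < δ := lt_min one_pos (by positivity)
  have hδ1 : δ ≤ 1 := min_le_left _ _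
  have hδ2 : δ ≤ γ / (2 * (α + 1)) := min_le_right _ _
  have hε₁ : 0 < ν (W + δ) - α := by
    have h := hνmono (Set.mem_Ici.2 hW0) (Set.mem_Ici.2 (by linarith : (0:ℝ) ≤ W + δ))
      (by linarith : W < W + δ)
    rw [hνW] at h; linarith
  set ε' := min ε (min ((ν (W + δ) - α) / 2) (γ / (2 * (W + 1)))) with hε'def
  have hε'0 : 0 < ε' := lt_min hε (lt_min (by linarith) (by positivity))
  have hε'ε : ε' ≤ ε := min_le_left _ _
  have hε'₁ : ε' < ν (W + δ) - α :=
    lt_of_le_of_lt (le_trans (min_le_right _ _) (min_le_left _ _)) (by linarith)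
  have hε'γ : ε' ≤ γ / (2 * (W + 1)) := le_trans (min_le_right _ _) (min_le_right _ _)
  have hαε'0 : 0 ≤ α + ε' := by linarith
  have hwαε' : w (α + ε') < W + δ := by
    have h1 : w (ν (W + δ)) = W + δ := hw' (W + δ) (by linarith)
    have h2 : ν (w (α + ε')) = α + ε' := (hw _ hαε'0).2
    by_contra h
    push_neg at h
    have h3 := hνmono.monotoneOn (Set.mem_Ici.2 (by linarith : (0:ℝ) ≤ W + δ))
      (Set.mem_Ici.2 (hw _ hαε'0).1) h
    rw [h2] at h3
    linarith
  have hkey : (α + ε') * w (α + ε') ≤ M := by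
    have hw1 : 0 ≤ w (α + ε') := (hw _ hαε'0).1
    have h5 : (α + ε') * w (α + ε') ≤ (α + ε') * (W + δ) :=
      mul_le_mul_of_nonneg_left hwαε'.le hαε'0
    have hαδ : α * δ ≤ γ / 2 := by
      have h6 : α * δ ≤ α * (γ / (2 * (α + 1))) := mul_le_mul_of_nonneg_left hδ2 hα
      have h7 : α * (γ / (2 * (α + 1))) ≤ (α + 1) * (γ / (2 * (α + 1))) :=
        mul_le_mul_of_nonneg_right (by linarith) (by positivity)
      have h8 : (α + 1) * (γ / (2 * (α + 1))) = γ / 2 := by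
        field_simp
      linarith
    have hεW : ε' * (W + δ) ≤ γ / 2 := by
      have h8 : ε' * (W + δ) ≤ ε' * (W + 1) :=
        mul_le_mul_of_nonneg_left (by linarith) hε'0.le
      have h9 : ε' * (W + 1) ≤ (γ / (2 * (W + 1))) * (W + 1) :=
        mul_le_mul_of_nonneg_right hε'γ (by linarith)
      have h10 : (γ / (2 * (W + 1))) * (W + 1) = γ / 2 := by
        field_simp
      linarith
    have hMeq : M = α * W + γ := by rw [hγdef]; ring
    have hexp : (α + ε') * (W + δ) = α * W + α * δ + ε' * (W + δ) := by ring
    linarith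
  have hexN : ∃ N : ℕ, x < (N:ℝ) ∧
      vQi N < (((NPi x + (β + ε') * ((N:ℝ) - x)) : ℝ) : EReal) := by
    by_contra hcon
    push_neg at hcon
    have hg : ∀ N : ℕ,
        (((max (NPi x + β * ((N:ℝ) - x)) (NPi x + (β + ε') * ((N:ℝ) - x)) : ℝ)) : EReal)
          ≤ vQi N := by
      intro N
      rcases le_or_gt ((N:ℝ)) x with hNx | hNx
      · have h1 : NPi x + β * ((N:ℝ) - x) ≤ NPi N := hsupp N (Nat.cast_nonneg N)
        have h2 : NPi x + (β + ε') * ((N:ℝ) - x) ≤ NPi x + β * ((N:ℝ) - x) := by nlinarith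
        have h3 : max (NPi x + β * ((N:ℝ) - x)) (NPi x + (β + ε') * ((N:ℝ) - x)) ≤ NPi N :=
          max_le h1 (le_trans h2 h1)
        exact le_trans (EReal.coe_le_coe_iff.2 h3) (hlei N)
      · have h1 : NPi x + β * ((N:ℝ) - x) ≤ NPi N := hsupp N (Nat.cast_nonneg N)
        have h2 := hcon N hNx
        rcases le_total (NPi x + β * ((N:ℝ) - x)) (NPi x + (β + ε') * ((N:ℝ) - x)) with h | h
        · rw [max_eq_right h]; exact h2
        · rw [max_eq_left h]; exact le_trans (EReal.coe_le_coe_iff.2 h1) (hlei N)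
    have hconvg : ConvexOn ℝ (Set.Ici (0:ℝ))
        (fun t => max (NPi x + β * (t - x)) (NPi x + (β + ε') * (t - x))) :=
      (affine_convexOn (NPi x) β x).sup (affine_convexOn (NPi x) (β + ε') x)
    have hmax := hmaxi _ hconvg hg
    obtain ⟨t, hxt, htan⟩ := htang ε' hε'0
    have h1 := hmax t (Set.mem_Ici.2 (le_trans hx hxt.le))
    have h2 : NPi x + (β + ε') * (t - x)
        ≤ max (NPi x + β * (t - x)) (NPi x + (β + ε') * (t - x)) := le_max_right _ _
    linarith
  obtain ⟨N, hxN, hvN⟩ := hexN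
  have hN1 : 1 ≤ (N:ℝ) := by
    have h0 : (0:ℝ) < N := lt_of_le_of_lt hx hxN
    exact_mod_cast h0
  have hNPiN : NPi N < NPi x + (β + ε') * ((N:ℝ) - x) :=
    EReal.coe_lt_coe_iff.1 (lt_of_le_of_lt (hlei N) hvN)
  have hlineN : NPi x + (β + ε') * ((N:ℝ) - x) ≤ (α + ε') * N := by
    have h1 := hline N (Nat.cast_nonneg N)
    nlinarith
  have hνN : ν N < α + ε' := by
    have h1 := hnui N hN1
    nlinarith
  have hNw : (N:ℝ) < w (α + ε') := by
    have h2 : ν (w (α + ε')) = α + ε' := (hw _ hαε'0).2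
    by_contra h
    push_neg at h
    have h3 := hνmono.monotoneOn (Set.mem_Ici.2 (hw _ hαε'0).1)
      (Set.mem_Ici.2 (Nat.cast_nonneg N)) h
    rw [h2] at h3
    linarith
  have hℓM : NPi x + (β + ε') * ((N:ℝ) - x) ≤ M := by
    have h4 : (α + ε') * (N:ℝ) ≤ (α + ε') * w (α + ε') :=
      mul_le_mul_of_nonneg_left hNw.le hαε'0
    linarith
  have hvQiM : vQi N < ((M:ℝ) : EReal) := lt_of_lt_of_le hvN (EReal.coe_le_coe_iff.2 hℓM)
  have hvji : vQj N ≤ vQi N := by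
    have h1 := htransji N
    rcases le_total (vQj N) ((M:ℝ):EReal) with h | h
    · rwa [min_eq_left h] at h1
    · rw [min_eq_right h] at h1
      exact absurd hvQiM (not_lt.2 h1)
  have hNPjN : NPj N < NPi x + (β + ε') * ((N:ℝ) - x) :=
    EReal.coe_lt_coe_iff.1 (lt_of_le_of_lt (le_trans (hlej N) hvji) hvN)
  refine ⟨N, hxN, ?_⟩
  have h1 : (β + ε') * ((N:ℝ) - x) ≤ (α + ε) * ((N:ℝ) - x) :=
    mul_le_mul_of_nonneg_right (by linarith) (by linarith)
  linarith

/-- Wan's lemma: if two power series over `O_{ℂ_p}` (here: over the ring of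
integers of a field `K` with an additive valuation `v` with `v p = 1`) with constant term `1`
are congruent mod `p^{m_ν(α)+1}`, and both Newton polygons `N_i` lie above `x·ν(x)` for
`x ≥ 1`, then the Newton polygons coincide on all sides of slope at most `α`. -/
theorem stmt_12 (p : ℕ) (hp : p.Prime) (K : Type*) [Field K]
    (v : K → EReal)
    (hv0 : ∀ x : K, v x = ⊤ ↔ x = 0)
    (hvmul : ∀ x y : K, v (x * y) = v x + v y)
    (hvadd : ∀ x y : K, min (v x) (v y) ≤ v (x + y))
    (hvp : v ((p : K)) = 1)
    (Q : Fin 2 → ℕ → K) (hQ0 : ∀ i, Q i 0 = 1)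
    (hQint : ∀ (i : Fin 2) (N : ℕ), (0 : EReal) ≤ v (Q i N))
    (NP : Fin 2 → ℝ → ℝ)
    (hNPconv : ∀ i, ConvexOn ℝ (Set.Ici (0 : ℝ)) (NP i))
    (hNPle : ∀ (i : Fin 2) (N : ℕ), ((NP i N : ℝ) : EReal) ≤ v (Q i N))
    (hNPmax : ∀ (i : Fin 2) (g : ℝ → ℝ), ConvexOn ℝ (Set.Ici (0 : ℝ)) g →
      (∀ N : ℕ, ((g N : ℝ) : EReal) ≤ v (Q i N)) → ∀ x ∈ Set.Ici (0 : ℝ), g x ≤ NP i x)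
    (ν w : ℝ → ℝ)
    (hνmono : StrictMonoOn ν (Set.Ici (0 : ℝ)))
    (hνcont : ContinuousOn ν (Set.Ici (0 : ℝ)))
    (hν0 : ν 0 ≤ 0)
    (hνtop : Tendsto ν atTop atTop)
    (hw : ∀ x : ℝ, 0 ≤ x → 0 ≤ w x ∧ ν (w x) = x)
    (hw' : ∀ x : ℝ, 0 ≤ x → w (ν x) = x)
    (hxw : MonotoneOn (fun x => x * w x) (Set.Ioi (0 : ℝ)))
    (hbound : ∀ (i : Fin 2) (x : ℝ), 1 ≤ x → x * ν x ≤ NP i x)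
    (α : ℝ) (hα : 0 ≤ α)
    (hcong : ∀ N : ℕ, (((⌊α * w α⌋ + 1 : ℤ) : ℝ) : EReal) ≤ v (Q 0 N - Q 1 N)) :
    ∀ x : ℝ, 0 ≤ x →
      ((∃ y : ℝ, x < y ∧ NP 0 y - NP 0 x ≤ α * (y - x)) ∨
        (∃ y : ℝ, x < y ∧ NP 1 y - NP 1 x ≤ α * (y - x))) →
      NP 0 x = NP 1 x := by
  -- basic valuation facts
  have hone : (1 : K) ≠ 0 := one_ne_zero
  have hv1nonneg : (0 : EReal) ≤ v 1 := by
    have h := hQint 0 0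
    rwa [hQ0 0] at h
  have hv1top : v 1 ≠ ⊤ := fun h => hone ((hv0 1).1 h)
  have hv1bot : v 1 ≠ ⊥ := by
    intro h
    rw [h] at hv1nonneg
    exact absurd hv1nonneg (by simp)
  have v1 : v 1 = 0 := by
    have h1 : v 1 = v 1 + v 1 := by
      have := hvmul 1 1
      rwa [one_mul] at this
    obtain ⟨r, hr⟩ : ∃ r : ℝ, v 1 = (r : EReal) := ⟨(v 1).toReal, (EReal.coe_toReal hv1top hv1bot).symm⟩
    rw [hr, ← EReal.coe_add, EReal.coe_eq_coe_iff] at h1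
    rw [hr]
    norm_num
    linarith
  have vm1 : v (-1 : K) = 0 := by
    have hm1ne : (-1 : K) ≠ 0 := neg_ne_zero.2 hone
    have hm1top : v (-1 : K) ≠ ⊤ := fun h => hm1ne ((hv0 (-1)).1 h)
    have h1 : v (1 : K) = v (-1 : K) + v (-1 : K) := by
      have := hvmul (-1 : K) (-1 : K)
      rwa [neg_one_mul, neg_neg] at this
    rw [v1] at h1
    have hm1bot : v (-1 : K) ≠ ⊥ := by
      intro h
      rw [h] at h1
      simp at h1
    obtain ⟨r, hr⟩ : ∃ r : ℝ, v (-1 : K) = (r : EReal) :=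
      ⟨(v (-1 : K)).toReal, (EReal.coe_toReal hm1top hm1bot).symm⟩
    rw [hr, ← EReal.coe_add] at h1
    rw [hr]
    have : (0 : ℝ) = r + r := by exact_mod_cast h1
    have hr0 : r = 0 := by linarith
    rw [hr0]; rfl
  have vneg : ∀ z : K, v (-z) = v z := by
    intro z
    have := hvmul (-1 : K) z
    rw [neg_one_mul, vm1, zero_add] at this
    exact this
  -- the modulus
  set M : ℝ := ((⌊α * w α⌋ + 1 : ℤ) : ℝ) with hMdef
  have hwα0 : 0 ≤ w α := (hw α hα).1
  have hνwα : ν (w α) = α := (hw α hα).2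
  have hM1 : (1 : ℝ) ≤ M := by
    rw [hMdef]
    have h := Int.floor_nonneg.2 (mul_nonneg hα hwα0)
    push_cast
    have : (0:ℝ) ≤ (⌊α * w α⌋ : ℝ) := by exact_mod_cast h
    linarith
  have hMgt : α * w α < M := by
    rw [hMdef]
    push_cast
    exact Int.lt_floor_add_one _
  -- congruence transfer
  have T01 : ∀ N : ℕ, min (v (Q 0 N)) ((M : ℝ) : EReal) ≤ v (Q 1 N) := by
    intro N
    have e : Q 0 N + (Q 1 N - Q 0 N) = Q 1 N := by ring
    have h1 := hvadd (Q 0 N) (Q 1 N - Q 0 N)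
    rw [e] at h1
    have h2 : v (Q 1 N - Q 0 N) = v (Q 0 N - Q 1 N) := by
      rw [← neg_sub (Q 0 N) (Q 1 N), vneg]
    have h3 : ((M : ℝ) : EReal) ≤ v (Q 1 N - Q 0 N) := by
      rw [h2]; exact hcong N
    exact le_trans (min_le_min (le_refl _) h3) h1
  have T10 : ∀ N : ℕ, min (v (Q 1 N)) ((M : ℝ) : EReal) ≤ v (Q 0 N) := by
    intro N
    have e : Q 1 N + (Q 0 N - Q 1 N) = Q 0 N := by ring
    have h1 := hvadd (Q 1 N) (Q 0 N - Q 1 N)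
    rw [e] at h1
    exact le_trans (min_le_min (le_refl _) (hcong N)) h1
  -- polygons are nonnegative and vanish at 0
  have hNPpos : ∀ (i : Fin 2) (t : ℝ), 0 ≤ t → 0 ≤ NP i t := by
    intro i t ht
    have h := hNPmax i (fun _ => 0) (convexOn_const 0 (convex_Ici 0))
      (fun N => by simpa using hQint i N) t (Set.mem_Ici.2 ht)
    simpa using h
  have hNP0 : ∀ i : Fin 2, NP i 0 = 0 := by
    intro i
    have h1 := hNPle i 0
    rw [hQ0 i, v1] at h1
    have h2 : NP i ((0:ℕ):ℝ) ≤ 0 := by exact_mod_cast h1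
    rw [Nat.cast_zero] at h2
    have h3 := hNPpos i 0 le_rfl
    linarith
  have hnuE : ∀ (i : Fin 2) (N : ℕ), 1 ≤ (N:ℝ) →
      (((N:ℝ) * ν N : ℝ) : EReal) ≤ v (Q i N) := by
    intro i N hN
    exact le_trans (EReal.coe_le_coe_iff.2 (hbound i N hN)) (hNPle i N)
  have hnuR : ∀ (i : Fin 2) (N : ℕ), 1 ≤ (N:ℝ) → (N:ℝ) * ν N ≤ NP i N :=
    fun i N hN => hbound i N hN
  intro x hx hdisj
  have key : ∀ i j : Fin 2,
      (∀ N : ℕ, min (v (Q i N)) ((M : ℝ) : EReal) ≤ v (Q j N)) →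
      (∀ N : ℕ, min (v (Q j N)) ((M : ℝ) : EReal) ≤ v (Q i N)) →
      (∃ y : ℝ, x < y ∧ NP i y - NP i x ≤ α * (y - x)) →
      NP i x = NP j x := by
    rintro i j hij hji ⟨y, hxy, hsl⟩
    have Hεi : ∀ ε : ℝ, 0 < ε → ∃ y', x < y' ∧ NP i y' - NP i x ≤ (α + ε) * (y' - x) := by
      intro ε hε
      refine ⟨y, hxy, ?_⟩
      nlinarith
    have h1 : NP i x ≤ NP j x :=
      wan_A ν M (w α) α x hνmono hwα0 hνwα hα hx hM1 hMgt (NP i) (NP j)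
        (fun N => v (Q i N)) (fun N => v (Q j N)) (hNPconv i) (hNP0 i)
        (hNPpos i) (hNPle i) (hNPmax j) (hnuE j) hij Hεi
    have H2 : ∀ ε : ℝ, 0 < ε → ∃ z, x < z ∧ NP j z - NP j x ≤ (α + ε) * (z - x) :=
      wan_B ν w M α x hνmono hw hw' hα hx hM1 hMgt (NP i) (NP j)
        (fun N => v (Q i N)) (fun N => v (Q j N)) (hNPconv i) (hNP0 i)
        (hNPpos i) (hNPle i) (hNPle j) (hNPmax i) (hnuR i) hji h1
        Hεi
    have h3 : NP j x ≤ NP i x :=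
      wan_A ν M (w α) α x hνmono hwα0 hνwα hα hx hM1 hMgt (NP j) (NP i)
        (fun N => v (Q j N)) (fun N => v (Q i N)) (hNPconv j) (hNP0 j)
        (hNPpos j) (hNPle j) (hNPmax i) (hnuE i) hji H2
    exact le_antisymm h1 h3
  rcases hdisj with h | h
  · exact key 0 1 T01 T10 h
  · exact (key 1 0 T10 T01 h).symm
end

section
/- Let p be prime, n ≥ 2, and for each i let χ_i : ℤ_pˣ → ℂˣ be a finite-order character with conductor c_i (the least positive integer m with 1 + p^m ℤ_p ⊆ ker χ_i), satisfying c_i := cond(χ_i) and cond(χ_i χ_j^{-1}) = max(c_i, c_j) for all i ≠ j. Suppose χ_n is trivial and let c_{(1)} ≤ ⋯ ≤ c_{(n−1)} be the conductors c_1,…,c_{n−1} in increasing order. Define the subgroup J = Γ(c̄) ≤ GL_n(ℤ_p) where c̄_{ii}=0, c̄_{ij} = ⌊max(c_i,c_j)/2⌋ for i < j, and c̄_{ij} = ⌊(max(c_i,c_j)+1)/2⌋ for i > j. Then the index of J in the Iwahori subgroup I (matrices upper triangular mod p) equals p^{c_{(1)} + 2c_{(2)} + ⋯ + (n−1)c_{(n−1)}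 − n(n−1)/2}. -/
set_option maxHeartbeats 1000000

section St18Helpers

variable {p : ℕ} [Fact p.Prime] {N : ℕ}


variable {p : ℕ} [Fact p.Prime] {N : ℕ}

lemma st18_isUnit_iff_cast (hN : N ≠ 0) (z : ZMod (p^N)) :
    IsUnit z ↔ IsUnit (ZMod.castHom (dvd_pow_self p hN) (ZMod p) z) := by
  have hp : p.Prime := Fact.out
  obtain ⟨k, rfl⟩ : ∃ k : ℕ, (k : ZMod (p^N)) = z := ⟨z.val, by simp [ZMod.natCast_val, ZMod.cast_id]⟩
  rw [map_natCast, ZMod.isUnit_iff_coprime, ZMod.isUnit_iff_coprime,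
    Nat.coprime_pow_right_iff (Nat.pos_of_ne_zero hN)]

lemma st18_not_isUnit_p (hN : N ≠ 0) : ¬ IsUnit (p : ZMod (p^N)) := by
  have hp : p.Prime := Fact.out
  rw [st18_isUnit_iff_cast hN, map_natCast, ZMod.natCast_self]
  exact not_isUnit_zero

lemma st18_isUnit_padic (hN : N ≠ 0) (z : ℤ_[p]) (h : IsUnit (PadicInt.toZModPow N z)) :
    IsUnit z := by
  by_contra hz
  have h1 : ‖z‖ < 1 := lt_of_le_of_ne z.norm_le_one (by simpa [PadicInt.isUnit_iff] using hz)
  obtain ⟨w, rfl⟩ : (p : ℤ_[p]) ∣ z := PadicInt.norm_lt_one_iff_dvd z |>.mp h1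
  rw [map_mul, map_natCast] at h
  exact st18_not_isUnit_p hN (isUnit_of_mul_isUnit_left h)

lemma st18_surj : Function.Surjective (PadicInt.toZModPow (p := p) N) := fun y =>
  ⟨(y.val : ℤ_[p]), by simp [ZMod.natCast_val, ZMod.cast_id]⟩

lemma st18_dvd_iff {k : ℕ} (hk : k ≤ N) (z : ℤ_[p]) :
    (p : ℤ_[p])^k ∣ z ↔ (p : ZMod (p^N))^k ∣ PadicInt.toZModPow N z := by
  constructor
  · rintro ⟨w, rfl⟩
    exact ⟨PadicInt.toZModPow N w, by rw [map_mul, map_pow, map_natCast]⟩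
  · rintro ⟨w, hw⟩
    obtain ⟨w', rfl⟩ := st18_surj w
    have : z - (p:ℤ_[p])^k * w' ∈ RingHom.ker (PadicInt.toZModPow (p := p) N) := by
      simp [RingHom.mem_ker, map_mul, map_pow, hw]
    rw [PadicInt.ker_toZModPow, Ideal.mem_span_singleton] at this
    obtain ⟨c, hc⟩ := this
    exact ⟨w' + (p:ℤ_[p])^(N-k) * c, by rw [mul_add, ← mul_assoc, ← pow_add, Nat.add_sub_cancel' hk]; linear_combination hc⟩



lemma st18_card_dvd_set {k : ℕ} (hk : k ≤ N) :
    Nat.card {z : ZMod (p^N) // (p : ZMod (p^N))^k ∣ z} = p^(N-k) := by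
  have hp : p.Prime := Fact.out
  haveI : NeZero (p^N) := ⟨pow_ne_zero _ hp.ne_zero⟩
  haveI : NeZero (p^(N-k)) := ⟨pow_ne_zero _ hp.ne_zero⟩
  have hsplit : p^N = p^k * p^(N-k) := by rw [← pow_add]; congr 1; omega
  have hzero : (p : ZMod (p^N))^N = 0 := by rw [← Nat.cast_pow, ZMod.natCast_self]
  have key : Function.Bijective (fun y : ZMod (p^(N-k)) =>
      (⟨(p:ZMod (p^N))^k * (y.val : ZMod (p^N)), ⟨_, rfl⟩⟩ :
        {z : ZMod (p^N) // (p : ZMod (p^N))^k ∣ z})) := by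
    constructor
    · intro y y' h
      simp only [Subtype.mk.injEq] at h
      have h2 : ((p^k * y.val : ℕ) : ZMod (p^N)) = ((p^k * y'.val : ℕ) : ZMod (p^N)) := by
        push_cast; exact h
      rw [ZMod.natCast_eq_natCast_iff] at h2
      have h2' : ((p^N : ℕ) : ℤ) ∣ (p^k * y'.val : ℤ) - (p^k * y.val : ℤ) := by
        exact_mod_cast Nat.modEq_iff_dvd.mp h2
      rw [hsplit] at h2'
      push_cast at h2'
      have h2'' : (p:ℤ)^k * (p:ℤ)^(N-k) ∣ (p:ℤ)^k * ((y'.val:ℤ) - (y.val:ℤ)) := by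
        convert h2' using 1; ring
      have h3 : y.val ≡ y'.val [MOD p^(N-k)] := by
        rw [Nat.modEq_iff_dvd]
        have := (mul_dvd_mul_iff_left (a := (p:ℤ)^k)
          (pow_ne_zero _ (by exact_mod_cast hp.ne_zero))).mp h2''
        exact_mod_cast this
      have : y.val = y'.val := Nat.ModEq.eq_of_lt_of_lt h3 y.val_lt y'.val_lt
      exact ZMod.val_injective _ this
    · rintro ⟨z, w, rfl⟩
      refine ⟨(w.val : ZMod (p^(N-k))), ?_⟩
      simp only [Subtype.mk.injEq]
      rw [ZMod.val_natCast]
      have hmd : ((w.val % p^(N-k) : ℕ) : ZMod (p^N))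
          = (w.val : ZMod (p^N)) - ((p^(N-k) * (w.val / p^(N-k)) : ℕ) : ZMod (p^N)) := by
        rw [eq_sub_iff_add_eq, ← Nat.cast_add]
        congr 1
        exact Nat.mod_add_div _ _
      rw [hmd]
      push_cast
      rw [ZMod.natCast_val, ZMod.cast_id, mul_sub, ← mul_assoc, ← pow_add,
        Nat.add_sub_cancel' hk, hzero]
      ring
  rw [← Nat.card_eq_of_bijective _ key, Nat.card_zmod]







lemma st18_isUnit_prod {M : Type*} [CommMonoid M] {ι : Type*} (s : Finset ι) (f : ι → M)
    (h : ∀ i ∈ s, IsUnit (f i)) : IsUnit (∏ i ∈ s, f i) := by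
  induction s using Finset.cons_induction with
  | empty => simp
  | cons a s ha ih =>
    rw [Finset.prod_cons]
    exact (h a (Finset.mem_cons_self a s)).mul (ih fun i hi => h i (Finset.mem_cons_of_mem hi))

variable (p N) in
noncomputable def st18_pi (n : ℕ) : GL (Fin n) ℤ_[p] →* GL (Fin n) (ZMod (p^N)) :=
  Units.map (RingHom.toMonoidHom ((PadicInt.toZModPow N).mapMatrix))

lemma st18_pi_apply {n : ℕ} (x : GL (Fin n) ℤ_[p]) (i j : Fin n) :
    ((st18_pi p N n x : GL (Fin n) (ZMod (p^N))) : Matrix (Fin n) (Fin n) (ZMod (p^N))) i j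
      = PadicInt.toZModPow N ((x : Matrix (Fin n) (Fin n) ℤ_[p]) i j) := rfl

lemma st18_pi_delta {n : ℕ} (x : GL (Fin n) ℤ_[p]) (i j : Fin n) :
    ((st18_pi p N n x : GL (Fin n) (ZMod (p^N))) : Matrix (Fin n) (Fin n) (ZMod (p^N))) i j
        - (if i = j then 1 else 0)
      = PadicInt.toZModPow N ((x : Matrix (Fin n) (Fin n) ℤ_[p]) i j - if i = j then 1 else 0) := by
  rw [map_sub, st18_pi_apply]
  congr 1
  split <;> simp

lemma st18_lift {n : ℕ} (hN : N ≠ 0) (b : Fin n → Fin n → ℕ) (hb : ∀ i j, b i j ≤ N)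
    (y : GL (Fin n) (ZMod (p^N)))
    (hy : ∀ i j, (p : ZMod (p^N))^(b i j) ∣
      ((y : Matrix (Fin n) (Fin n) (ZMod (p^N))) i j - if i = j then 1 else 0)) :
    ∃ x : GL (Fin n) ℤ_[p], st18_pi p N n x = y ∧
      ∀ i j, (p:ℤ_[p])^(b i j) ∣
        ((x : Matrix (Fin n) (Fin n) ℤ_[p]) i j - if i = j then 1 else 0) := by
  choose w hw using hy
  choose w' hw' using fun i j => st18_surj (p := p) (N := N) (w i j)
  set X : Matrix (Fin n) (Fin n) ℤ_[p] :=
    Matrix.of (fun i j => (if i = j then 1 else 0) + (p:ℤ_[p])^(b i j) * w' i j) with hX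
  have hfX : X.map (PadicInt.toZModPow N) = (y : Matrix (Fin n) (Fin n) (ZMod (p^N))) := by
    ext i j
    rw [Matrix.map_apply]
    simp only [hX, Matrix.of_apply]
    rw [map_add, map_mul, map_pow, map_natCast, hw']
    rw [← hw i j]
    split <;> simp
  have hdet : IsUnit X.det := by
    apply st18_isUnit_padic hN
    rw [RingHom.map_det, RingHom.mapMatrix_apply, hfX]
    exact (Matrix.isUnit_iff_isUnit_det _).mp y.isUnit
  have hX' : IsUnit X := (Matrix.isUnit_iff_isUnit_det _).mpr hdet
  refine ⟨hX'.unit, ?_, ?_⟩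
  · apply Units.ext
    show (PadicInt.toZModPow N).mapMatrix (hX'.unit : Matrix (Fin n) (Fin n) ℤ_[p]) = _
    rw [RingHom.mapMatrix_apply, hX'.unit_spec, hfX]
  · intro i j
    refine ⟨w' i j, ?_⟩
    rw [hX'.unit_spec]
    simp [hX]

lemma st18_map_mem {n : ℕ} (hN : N ≠ 0) (b : Fin n → Fin n → ℕ) (hb : ∀ i j, b i j ≤ N)
    (H : Subgroup (GL (Fin n) ℤ_[p]))
    (hH : ∀ x, x ∈ H ↔ ∀ i j, (p:ℤ_[p])^(b i j) ∣
      ((x : Matrix (Fin n) (Fin n) ℤ_[p]) i j - if i = j then 1 else 0))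
    (y : GL (Fin n) (ZMod (p^N))) :
    y ∈ H.map (st18_pi p N n) ↔ ∀ i j, (p : ZMod (p^N))^(b i j) ∣
      ((y : Matrix (Fin n) (Fin n) (ZMod (p^N))) i j - if i = j then 1 else 0) := by
  constructor
  · rintro ⟨x, hx, rfl⟩ i j
    rw [st18_pi_delta]
    exact (st18_dvd_iff (hb i j) _).mp ((hH x).mp hx i j)
  · intro hy
    obtain ⟨x, hpx, hx⟩ := st18_lift hN b hb y hy
    exact ⟨x, (hH x).mpr hx, hpx⟩

lemma st18_diag_unit {n : ℕ} (hN : N ≠ 0) (M : Matrix (Fin n) (Fin n) (ZMod (p^N)))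
    (hlow : ∀ i j : Fin n, j < i → (p : ZMod (p^N)) ∣ M i j) :
    IsUnit M.det ↔ ∀ i, IsUnit (M i i) := by
  set g := ZMod.castHom (dvd_pow_self p hN) (ZMod p) with hg
  have htri : (M.map g).BlockTriangular id := by
    intro i j hij
    obtain ⟨c, hc⟩ := hlow i j hij
    rw [Matrix.map_apply, hc, map_mul, map_natCast, ZMod.natCast_self, zero_mul]
  have hdet : g M.det = ∏ i, g (M i i) := by
    rw [RingHom.map_det, RingHom.mapMatrix_apply, Matrix.det_of_upperTriangular htri]
    rfl
  rw [st18_isUnit_iff_cast hN, ← hg, hdet]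
  constructor
  · intro h i
    rw [st18_isUnit_iff_cast hN, ← hg]
    exact isUnit_of_dvd_unit (Finset.dvd_prod_of_mem (fun i => g (M i i)) (Finset.mem_univ i)) h
  · intro h
    exact st18_isUnit_prod _ _ (fun i _ => (st18_isUnit_iff_cast hN (M i i)).mp (h i))




lemma st18_card_subgroup {n : ℕ} (hN : N ≠ 0) (b : Fin n → Fin n → ℕ)
    (hb0 : ∀ i, b i i = 0) (hb1 : ∀ i j : Fin n, j < i → b i j ≠ 0)
    (H' : Subgroup (GL (Fin n) (ZMod (p^N))))
    (hH' : ∀ y, y ∈ H' ↔ ∀ i j, (p : ZMod (p^N))^(b i j) ∣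
      ((y : Matrix (Fin n) (Fin n) (ZMod (p^N))) i j - if i = j then 1 else 0)) :
    Nat.card H' = ∏ ij : Fin n × Fin n,
      Nat.card {z : ZMod (p^N) //
        if ij.1 = ij.2 then IsUnit z else (p : ZMod (p^N))^(b ij.1 ij.2) ∣ z} := by
  haveI : NeZero (p^N) := ⟨pow_ne_zero _ (Fact.out : p.Prime).ne_zero⟩
  rw [← Nat.card_pi]
  -- key divisibility helper
  have hdvd : ∀ (M : Matrix (Fin n) (Fin n) (ZMod (p^N))),
      (∀ i j, (p:ZMod (p^N))^(b i j) ∣ (M i j - if i = j then 1 else 0)) →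
      ∀ i j : Fin n, j < i → (p : ZMod (p^N)) ∣ M i j := by
    intro M hM i j hij
    have := hM i j
    rw [if_neg hij.ne', sub_zero] at this
    exact dvd_trans (dvd_pow_self _ (hb1 i j hij)) this
  apply Nat.card_eq_of_bijective
    (fun (y : H') (ij : Fin n × Fin n) =>
      (⟨((y : GL (Fin n) (ZMod (p^N))) : Matrix (Fin n) (Fin n) (ZMod (p^N))) ij.1 ij.2, by
        have hy := (hH' _).mp y.2
        split
        · next heq =>
          rcases ij with ⟨i, j⟩
          simp only at heq
          subst heq
          exact ((st18_diag_unit hN _ (hdvd _ hy)).mp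
            ((Matrix.isUnit_iff_isUnit_det _).mp (y : GL (Fin n) (ZMod (p^N))).isUnit)) i
        · next hne =>
          have := hy ij.1 ij.2
          rwa [if_neg hne, sub_zero] at this⟩ :
        {z : ZMod (p^N) // if ij.1 = ij.2 then IsUnit z
          else (p : ZMod (p^N))^(b ij.1 ij.2) ∣ z}))
  constructor
  · intro y y' h
    have : ∀ i j, ((y : GL (Fin n) (ZMod (p^N))) : Matrix (Fin n) (Fin n) (ZMod (p^N))) i j
        = ((y' : GL (Fin n) (ZMod (p^N))) : Matrix (Fin n) (Fin n) (ZMod (p^N))) i j := by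
      intro i j
      exact congrArg Subtype.val (congrFun h (i, j))
    ext i j
    exact this i j
  · intro t
    set M : Matrix (Fin n) (Fin n) (ZMod (p^N)) := Matrix.of (fun i j => (t (i, j)).1) with hM
    have hlow : ∀ i j : Fin n, j < i → (p : ZMod (p^N)) ∣ M i j := by
      intro i j hij
      have := (t (i, j)).2
      rw [if_neg hij.ne'] at this
      exact dvd_trans (dvd_pow_self _ (hb1 i j hij)) this
    have hdiag : ∀ i, IsUnit (M i i) := by
      intro i
      have := (t (i, i)).2
      rwa [if_pos rfl] at this
    have hMu : IsUnit M := (Matrix.isUnit_iff_isUnit_det _).mpr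
      ((st18_diag_unit hN M hlow).mpr hdiag)
    have hmem : hMu.unit ∈ H' := by
      rw [hH']
      intro i j
      rcases eq_or_ne i j with rfl | hne
      · simp [hb0]
      · rw [if_neg hne, sub_zero]
        have := (t (i, j)).2
        rw [if_neg hne] at this
        show (p : ZMod (p^N))^(b i j) ∣ (hMu.unit : Matrix (Fin n) (Fin n) (ZMod (p^N))) i j
        rw [hMu.unit_spec]
        exact this
    refine ⟨⟨hMu.unit, hmem⟩, ?_⟩
    funext ij
    apply Subtype.ext
    show (hMu.unit : Matrix (Fin n) (Fin n) (ZMod (p^N))) ij.1 ij.2 = (t ij).1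
    rw [hMu.unit_spec]
    rfl

lemma st18_relindex_card {G : Type*} [Group G] [Finite G] {H K : Subgroup G} (h : H ≤ K) :
    H.relIndex K * Nat.card H = Nat.card K := by
  rw [Subgroup.relIndex, ← Nat.card_congr (Subgroup.subgroupOfEquivOfLe h).toEquiv]
  exact Subgroup.index_mul_card _


-- sum of (if i < j then c else 0) over i
lemma st18_sum_lt {n : ℕ} (j : Fin n) (c : ℕ) :
    (∑ i : Fin n, if i < j then c else 0) = (j : ℕ) * c := by
  rw [← Finset.sum_filter]
  rw [Finset.sum_const, smul_eq_mul]
  congr 1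
  rw [show Finset.filter (fun i => i < j) Finset.univ = Finset.Iio j from Finset.ext (by simp),
    Fin.card_Iio]

lemma st18_sum_iota {n : ℕ} :
    (∑ ij : Fin n × Fin n, if ij.2 < ij.1 then 1 else 0) = n * (n-1) / 2 := by
  rw [Fintype.sum_prod_type]
  have : ∀ i : Fin n, (∑ j : Fin n, if j < i then (1:ℕ) else 0) = (i : ℕ) := by
    intro i
    rw [st18_sum_lt i 1, mul_one]
  simp_rw [this]
  rw [Fin.sum_univ_eq_sum_range (fun i => i) n, Finset.sum_range_id]

lemma st18_sum_a {n : ℕ} (cc : Fin n → ℕ) (hcc : ∀ i, 1 ≤ cc i)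
    (d : Fin n → ℕ) (hd : Monotone d) (e : Equiv.Perm (Fin n)) (hde : ∀ i, d i = cc (e i)) :
    (∑ ij : Fin n × Fin n, (if ij.1 = ij.2 then 0
        else if ij.1 < ij.2 then max (cc ij.1) (cc ij.2) / 2
        else (max (cc ij.1) (cc ij.2) + 1) / 2))
      = ∑ i : Fin n, (i : ℕ) * d i := by
  set a : Fin n → Fin n → ℕ := fun i j => if i = j then 0
    else if i < j then max (cc i) (cc j) / 2 else (max (cc i) (cc j) + 1) / 2 with ha
  set G : Fin n → Fin n → ℕ := fun i j => if i = j then 0 else max (cc i) (cc j) with hG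
  set Gd : Fin n → Fin n → ℕ := fun i j => if i = j then 0 else max (d i) (d j) with hGd
  have hshow : (∑ ij : Fin n × Fin n, (if ij.1 = ij.2 then 0
        else if ij.1 < ij.2 then max (cc ij.1) (cc ij.2) / 2
        else (max (cc ij.1) (cc ij.2) + 1) / 2))
      = ∑ ij : Fin n × Fin n, a ij.1 ij.2 := rfl
  rw [hshow]
  have key : ∀ i j, a i j + a j i = G i j := by
    intro i j
    simp only [ha, hG]
    rcases lt_trichotomy i j with h | h | h
    · simp only [if_neg h.ne, if_pos h, if_neg h.ne', if_neg (not_lt.mpr h.le)]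
      rw [max_comm (cc j)]
      generalize max (cc i) (cc j) = m
      omega
    · simp [h]
    · simp only [if_neg h.ne, if_pos h, if_neg h.ne', if_neg (not_lt.mpr h.le)]
      rw [max_comm (cc j)]
      generalize max (cc i) (cc j) = m
      omega
  have swap : (∑ ij : Fin n × Fin n, a ij.2 ij.1) = ∑ ij : Fin n × Fin n, a ij.1 ij.2 :=
    Fintype.sum_equiv (Equiv.prodComm _ _) _ _ (fun ij => rfl)
  have double : 2 * (∑ ij : Fin n × Fin n, a ij.1 ij.2) = ∑ ij : Fin n × Fin n, G ij.1 ij.2 := by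
    rw [two_mul]
    nth_rewrite 2 [← swap]
    rw [← Finset.sum_add_distrib]
    exact Finset.sum_congr rfl (fun ij _ => key ij.1 ij.2)
  have perm : (∑ ij : Fin n × Fin n, Gd ij.1 ij.2) = ∑ ij : Fin n × Fin n, G ij.1 ij.2 := by
    apply Fintype.sum_equiv (Equiv.prodCongr e e)
    intro ij
    simp only [hGd, hG, Equiv.prodCongr_apply, Prod.map]
    rw [hde ij.1, hde ij.2]
    congr 1
    simp [e.injective.eq_iff]
  have splitG : ∀ i j : Fin n, Gd i j
      = (if i < j then d j else 0) + (if j < i then d i else 0) := by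
    intro i j
    simp only [hGd]
    rcases lt_trichotomy i j with h | h | h
    · rw [if_neg h.ne, if_pos h, if_neg (not_lt.mpr h.le), max_eq_right (hd h.le), add_zero]
    · simp [h]
    · rw [if_neg h.ne', if_neg (not_lt.mpr h.le), if_pos h, max_eq_left (hd h.le), zero_add]
  have sumGd : (∑ ij : Fin n × Fin n, Gd ij.1 ij.2) = 2 * ∑ i : Fin n, (i : ℕ) * d i := by
    calc (∑ ij : Fin n × Fin n, Gd ij.1 ij.2)
        = (∑ ij : Fin n × Fin n, if ij.1 < ij.2 then d ij.2 else 0)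
          + (∑ ij : Fin n × Fin n, if ij.2 < ij.1 then d ij.1 else 0) := by
          rw [← Finset.sum_add_distrib]
          exact Finset.sum_congr rfl (fun ij _ => splitG ij.1 ij.2)
      _ = 2 * ∑ i : Fin n, (i : ℕ) * d i := by
          rw [two_mul]
          congr 1
          · rw [Fintype.sum_prod_type_right]
            exact Finset.sum_congr rfl (fun j _ => st18_sum_lt j (d j))
          · rw [Fintype.sum_prod_type]
            exact Finset.sum_congr rfl (fun i _ => by
              simpa using st18_sum_lt i (d i))
  omega

end St18Helpers

/-- for finite-order characters `χ_1,…,χ_n` of `ℤ_pˣ` with conductors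
`c_1,…,c_n` satisfying `cond(χ_i χ_j⁻¹) = max(c_i, c_j)` and with `χ_n` trivial, the Roche
subgroup `J = Γ(c̄)` has index `p^{c_{(1)} + 2c_{(2)} + ⋯ + (n-1)c_{(n-1)} - n(n-1)/2}` in
the Iwahori subgroup `I`.  Here `d` is a monotone rearrangement of all `n` conductors
(the trivial character contributing the minimal conductor `1`), so that
`Σ_k k·d_k = Σ_i i·c_{(i)}`. -/
theorem stmt_18 (p : ℕ) [Fact p.Prime] (n : ℕ) (hn : 2 ≤ n)
    (χ : Fin n → (ℤ_[p]ˣ →* ℂˣ))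
    (hfin : ∀ i, ∃ m : ℕ, 0 < m ∧ ∀ u : ℤ_[p]ˣ, (χ i u) ^ m = 1)
    (cc : Fin n → ℕ)
    (hcond : ∀ i, IsLeast
      {m : ℕ | 0 < m ∧ ∀ u : ℤ_[p]ˣ, (p : ℤ_[p]) ^ m ∣ ((u : ℤ_[p]) - 1) → χ i u = 1} (cc i))
    (hratio : ∀ i j, i ≠ j → IsLeast
      {m : ℕ | 0 < m ∧ ∀ u : ℤ_[p]ˣ, (p : ℤ_[p]) ^ m ∣ ((u : ℤ_[p]) - 1) → χ i u = χ j u}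
      (max (cc i) (cc j)))
    (hlast : ∀ u : ℤ_[p]ˣ, χ (⟨n - 1, by omega⟩ : Fin n) u = 1)
    (d : Fin n → ℕ) (hd : Monotone d)
    (e : Equiv.Perm (Fin n)) (hde : ∀ i, d i = cc (e i))
    (J : Subgroup (Matrix.GeneralLinearGroup (Fin n) ℤ_[p]))
    (hJ : ∀ x : Matrix.GeneralLinearGroup (Fin n) ℤ_[p], x ∈ J ↔
      ∀ i j : Fin n,
        (p : ℤ_[p]) ^ (if i = j then 0
            else if i < j then max (cc i) (cc j) / 2
            else (max (cc i) (cc j) + 1) / 2) ∣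
          ((x : Matrix (Fin n) (Fin n) ℤ_[p]) i j - if i = j then 1 else 0))
    (I : Subgroup (Matrix.GeneralLinearGroup (Fin n) ℤ_[p]))
    (hI : ∀ x : Matrix.GeneralLinearGroup (Fin n) ℤ_[p], x ∈ I ↔
      ∀ i j : Fin n, j < i → (p : ℤ_[p]) ∣ (x : Matrix (Fin n) (Fin n) ℤ_[p]) i j) :
    J.relIndex I = p ^ ((∑ i : Fin n, (i : ℕ) * d i) - n * (n - 1) / 2) := by
  have hp : p.Prime := Fact.out
  -- basic facts about conductors
  have hcc1 : ∀ i, 1 ≤ cc i := fun i => (hcond i).1.1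
  set C : ℕ := Finset.univ.sup cc with hC
  have hccC : ∀ i, cc i ≤ C := fun i => Finset.le_sup (Finset.mem_univ i)
  set N : ℕ := C + 1 with hNdef
  have hN : N ≠ 0 := by omega
  haveI : NeZero (p^N) := ⟨pow_ne_zero _ hp.ne_zero⟩
  -- the two exponent matrices
  set bJ : Fin n → Fin n → ℕ := fun i j => if i = j then 0
    else if i < j then max (cc i) (cc j) / 2 else (max (cc i) (cc j) + 1) / 2 with hbJ
  set bI : Fin n → Fin n → ℕ := fun i j => if j < i then 1 else 0 with hbI
  have hbJle : ∀ i j, bJ i j ≤ N := by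
    intro i j
    have h1 := hcc1 i; have h2 := hccC i; have h3 := hcc1 j; have h4 := hccC j
    have h5 : max (cc i) (cc j) ≤ C := max_le h2 h4
    have h6 : 1 ≤ max (cc i) (cc j) := le_trans h1 (le_max_left _ _)
    simp only [hbJ]
    split
    · omega
    · split <;> omega
  have hbIle : ∀ i j, bI i j ≤ N := by
    intro i j; simp only [hbI]; split <;> omega
  have hbJ0 : ∀ i, bJ i i = 0 := fun i => by simp [hbJ]
  have hbI0 : ∀ i, bI i i = 0 := fun i => by simp [hbI]
  have hbJ1 : ∀ i j : Fin n, j < i → bJ i j ≠ 0 := by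
    intro i j hij
    have h6 : 1 ≤ max (cc i) (cc j) := le_trans (hcc1 i) (le_max_left _ _)
    simp only [hbJ, if_neg hij.ne', if_neg (not_lt.mpr hij.le)]
    omega
  have hbI1 : ∀ i j : Fin n, j < i → bI i j ≠ 0 := by
    intro i j hij; simp [hbI, hij]
  have hbIJ : ∀ i j, bI i j ≤ bJ i j := by
    intro i j
    have h6 : 1 ≤ max (cc i) (cc j) := le_trans (hcc1 i) (le_max_left _ _)
    simp only [hbI, hbJ]
    rcases lt_trichotomy i j with h | h | h
    · simp [if_neg h.ne, if_pos h, if_neg (not_lt.mpr h.le)]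
    · simp [h]
    · rw [if_pos h, if_neg h.ne', if_neg (not_lt.mpr h.le)]
      omega
  -- membership characterizations in the required uniform shape
  have hJ' : ∀ x : GL (Fin n) ℤ_[p], x ∈ J ↔ ∀ i j, (p:ℤ_[p])^(bJ i j) ∣
      ((x : Matrix (Fin n) (Fin n) ℤ_[p]) i j - if i = j then 1 else 0) := hJ
  have hI' : ∀ x : GL (Fin n) ℤ_[p], x ∈ I ↔ ∀ i j, (p:ℤ_[p])^(bI i j) ∣
      ((x : Matrix (Fin n) (Fin n) ℤ_[p]) i j - if i = j then 1 else 0) := by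
    intro x
    rw [hI x]
    constructor
    · intro h i j
      rcases lt_trichotomy j i with hij | hij | hij
      · rw [if_neg hij.ne']
        simp only [hbI, if_pos hij, pow_one, sub_zero]
        exact h i j hij
      · simp [hbI, hij]
      · simp [hbI, not_lt.mpr hij.le]
    · intro h i j hij
      have := h i j
      simp only [hbI, if_pos hij, pow_one, if_neg hij.ne', sub_zero] at this
      exact this
  set π := st18_pi p N n with hπ
  -- kernel is contained in J and I
  have hker : ∀ (H : Subgroup (GL (Fin n) ℤ_[p])) (b : Fin n → Fin n → ℕ),
      (∀ x : GL (Fin n) ℤ_[p], x ∈ H ↔ ∀ i j, (p:ℤ_[p])^(b i j) ∣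
        ((x : Matrix (Fin n) (Fin n) ℤ_[p]) i j - if i = j then 1 else 0)) →
      (∀ i j, b i j ≤ N) → π.ker ≤ H := by
    intro H b hH hb x hx
    rw [MonoidHom.mem_ker] at hx
    rw [hH]
    intro i j
    rw [st18_dvd_iff (hb i j), map_sub]
    have h1 : PadicInt.toZModPow N ((x : Matrix (Fin n) (Fin n) ℤ_[p]) i j)
        = ((π x : GL (Fin n) (ZMod (p^N))) : Matrix (Fin n) (Fin n) (ZMod (p^N))) i j := rfl
    have h2 : PadicInt.toZModPow N (if i = j then (1:ℤ_[p]) else 0)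
        = if i = j then 1 else 0 := by split <;> simp
    rw [h1, h2, hx, Units.val_one, Matrix.one_apply, sub_self]
    exact dvd_zero _
  -- reduce to finite quotient
  have hredJ : (J.map π).comap π = J := by
    rw [Subgroup.comap_map_eq, sup_eq_left]
    exact hker J bJ hJ' hbJle
  have hrel : J.relIndex I = (J.map π).relIndex (I.map π) := by
    conv_lhs => rw [← hredJ]
    exact Subgroup.relIndex_comap (J.map π) π I
  set Jm := J.map π with hJm
  set Im := I.map π with hIm
  have hJmc : ∀ y, y ∈ Jm ↔ ∀ i j, (p : ZMod (p^N))^(bJ i j) ∣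
      ((y : Matrix (Fin n) (Fin n) (ZMod (p^N))) i j - if i = j then 1 else 0) :=
    st18_map_mem hN bJ hbJle J hJ'
  have hImc : ∀ y, y ∈ Im ↔ ∀ i j, (p : ZMod (p^N))^(bI i j) ∣
      ((y : Matrix (Fin n) (Fin n) (ZMod (p^N))) i j - if i = j then 1 else 0) :=
    st18_map_mem hN bI hbIle I hI'
  have hle : Jm ≤ Im := by
    intro y hy
    rw [hImc]
    intro i j
    exact dvd_trans (pow_dvd_pow _ (hbIJ i j)) ((hJmc y).mp hy i j)
  -- cardinalities
  haveI : Finite (GL (Fin n) (ZMod (p^N))) := inferInstance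
  have cJ := st18_card_subgroup hN bJ hbJ0 hbJ1 Jm hJmc
  have cI := st18_card_subgroup hN bI hbI0 hbI1 Im hImc
  -- termwise comparison
  have hterm : ∀ ij : Fin n × Fin n,
      Nat.card {z : ZMod (p^N) //
          if ij.1 = ij.2 then IsUnit z else (p : ZMod (p^N))^(bI ij.1 ij.2) ∣ z}
        = p^(bJ ij.1 ij.2 - bI ij.1 ij.2) * Nat.card {z : ZMod (p^N) //
          if ij.1 = ij.2 then IsUnit z else (p : ZMod (p^N))^(bJ ij.1 ij.2) ∣ z} := by
    rintro ⟨i, j⟩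
    rcases eq_or_ne i j with rfl | hne
    · simp only [if_pos rfl, hbJ0, hbI0, Nat.sub_zero, pow_zero, one_mul]
    · simp only [if_neg hne]
      rw [st18_card_dvd_set (hbIle i j), st18_card_dvd_set (hbJle i j), ← pow_add]
      congr 1
      have := hbIJ i j; have := hbJle i j
      omega
  have hcards : Nat.card Im = p^(∑ ij : Fin n × Fin n, (bJ ij.1 ij.2 - bI ij.1 ij.2))
      * Nat.card Jm := by
    rw [cI, cJ, Finset.prod_congr rfl (fun ij _ => hterm ij), Finset.prod_mul_distrib,
      Finset.prod_pow_eq_pow_sum]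
  -- conclude the index
  have hidx := st18_relindex_card hle
  rw [hcards] at hidx
  have hpos : 0 < Nat.card Jm := Nat.card_pos
  have hfin : Jm.relIndex Im = p^(∑ ij : Fin n × Fin n, (bJ ij.1 ij.2 - bI ij.1 ij.2)) :=
    Nat.eq_of_mul_eq_mul_right hpos hidx
  rw [hrel, hfin]
  -- exponent arithmetic
  congr 1
  have hsJ : (∑ ij : Fin n × Fin n, bJ ij.1 ij.2) = ∑ i : Fin n, (i : ℕ) * d i :=
    st18_sum_a cc hcc1 d hd e hde
  have hsI : (∑ ij : Fin n × Fin n, bI ij.1 ij.2) = n * (n-1) / 2 := st18_sum_iota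
  have hsub : (∑ ij : Fin n × Fin n, (bJ ij.1 ij.2 - bI ij.1 ij.2))
      + (∑ ij : Fin n × Fin n, bI ij.1 ij.2) = ∑ ij : Fin n × Fin n, bJ ij.1 ij.2 := by
    rw [← Finset.sum_add_distrib]
    exact Finset.sum_congr rfl (fun ij _ => Nat.sub_add_cancel (hbIJ ij.1 ij.2))
  omega
end
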